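/- arXiv:2110.01508 — 4 statements merged into one kernel-verified Lean document; each statement's English description precedes it below -/
import Mathlib

section
/- Let Γ be a primitive graded graph (for any two vertices λ₁, λ₂ there exists a vertex μ with μ ≥ λ₁ and μ ≥ λ₂) and let I be a nonempty ideal of Γ, regarded as a graded graph with the induced edges. Then the restriction map φ ↦ φ|_I is a bijection from the set of strictly positive indecomposable harmonic functions on Γ (finite or semifinite) onto the set of strictly positive indecomposable harmonic functions on I (finite or semifinite). -/
/-!
Common definitions: graded graphs, ideals and coideals, harmonic functions and the
cone `K⁺`, finite / semifinite / indecomposable harmonic functions.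
-/

open scoped ENNReal NNReal

namespace Zigzag

/-- A graded graph: vertices partitioned into finite levels, oriented edges going up
one level, every vertex having at least one outgoing edge. -/
structure GradedGraph where
  V : Type
  rank : V → ℕ
  adj : V → V → Prop
  rank_adj : ∀ ⦃x y⦄, adj x y → rank y = rank x + 1
  finLevels : ∀ n : ℕ, {x : V | rank x = n}.Finite
  outEdge : ∀ x : V, ∃ y, adj x y

namespace GradedGraph

variable (G : GradedGraph)

/-- `x ≤ y`: `y` is reachable from `x` by a directed path (possibly trivial). -/
def le (x y : G.V) : Prop := Relation.ReflTransGen G.adj x y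

/-- The finset of upper neighbours of a vertex. -/
noncomputable def upFinset (x : G.V) : Finset G.V :=
  ((G.finLevels (G.rank x + 1)).subset fun _ hy => G.rank_adj hy).toFinset

/-- A coideal: closed under going down. -/
def IsCoideal (J : Set G.V) : Prop := ∀ a ∈ J, ∀ b, G.le b a → b ∈ J

/-- A saturated coideal: a coideal in which every vertex has an upper neighbour. -/
def IsSatCoideal (J : Set G.V) : Prop :=
  G.IsCoideal J ∧ ∀ a ∈ J, ∃ b ∈ J, G.adj a b

/-- A primitive saturated coideal: a saturated coideal which is not the union of two
strictly smaller saturated coideals. -/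
def IsPrimCoideal (J : Set G.V) : Prop :=
  G.IsSatCoideal J ∧ ∀ J₁ J₂ : Set G.V, G.IsSatCoideal J₁ → G.IsSatCoideal J₂ →
    J = J₁ ∪ J₂ → J = J₁ ∨ J = J₂

/-- An ideal: closed under going up. -/
def IsIdeal (I : Set G.V) : Prop := ∀ a ∈ I, ∀ b, G.le a b → b ∈ I

/-- A `[0,∞]`-valued function on the vertices is harmonic if its value at any vertex
equals the sum of its values at the upper neighbours. -/
def Harmonic (φ : G.V → ℝ≥0∞) : Prop := ∀ x, φ x = ∑ y ∈ G.upFinset x, φ y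

/-- The relation `λ = ∑_{μ : λ ↗ μ} μ` as an element of the free module. -/
noncomputable def relOf (x : G.V) : G.V →₀ ℝ :=
  Finsupp.single x 1 - ∑ y ∈ G.upFinset x, Finsupp.single y 1

/-- The submodule of relations defining `K(Γ)`. -/
noncomputable def Krel : Submodule ℝ (G.V →₀ ℝ) :=
  Submodule.span ℝ (Set.range G.relOf)

/-- The class of `f` in `K(Γ)`. -/
noncomputable def kmk (f : G.V →₀ ℝ) : (G.V →₀ ℝ) ⧸ G.Krel :=
  Submodule.Quotient.mk f

/-- The cone `K⁺(Γ)` spanned by the vertices in `K(Γ)`. -/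
noncomputable def Kpos : Set ((G.V →₀ ℝ) ⧸ G.Krel) :=
  G.kmk '' {f | ∀ x, 0 ≤ f x}

/-- The order defined by the cone: `x ≤_K y` iff `y − x ∈ K⁺(Γ)`. -/
def leK (x y : (G.V →₀ ℝ) ⧸ G.Krel) : Prop := y - x ∈ G.Kpos

/-- The value of (the canonical extension of) `φ` at a nonnegative combination of
vertices. -/
noncomputable def phiHat (φ : G.V → ℝ≥0∞) (f : G.V →₀ ℝ) : ℝ≥0∞ :=
  ∑ x ∈ f.support, ENNReal.ofReal (f x) * φ x

/-- `φ` is everywhere finite. -/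
def FiniteH (φ : G.V → ℝ≥0∞) : Prop := ∀ x, φ x ≠ ⊤

/-- `φ` is semifinite: not everywhere finite, and its value at any element of the cone
`K⁺(Γ)` is the supremum of its values at the `≤_K`-smaller elements of the cone where
it is finite. -/
def Semifinite (φ : G.V → ℝ≥0∞) : Prop :=
  (∃ x, φ x = ⊤) ∧
  ∀ f : G.V →₀ ℝ, (∀ x, 0 ≤ f x) →
    G.phiHat φ f =
      ⨆ g ∈ {g : G.V →₀ ℝ |
        (∀ x, 0 ≤ g x) ∧ G.leK (G.kmk g) (G.kmk f) ∧ G.phiHat φ g ≠ ⊤},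
        G.phiHat φ g

/-- A semifinite harmonic function `φ` is indecomposable if any finite or semifinite
harmonic function `φ′ ≤ φ` which does not vanish identically on the finiteness ideal
of `φ` is a constant multiple of `φ` on that ideal. -/
def IndecSemifinite (φ : G.V → ℝ≥0∞) : Prop :=
  ∀ φ' : G.V → ℝ≥0∞, G.Harmonic φ' →
    (G.FiniteH φ' ∨ G.Semifinite φ') →
    (∀ x, φ' x ≤ φ x) →
    (∃ x, φ x ≠ ⊤ ∧ φ' x ≠ 0) →
    ∃ c : ℝ≥0, ∀ x, φ x ≠ ⊤ → φ' x = (c : ℝ≥0∞) * φ x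

/-- A finite harmonic function `φ` is indecomposable if any harmonic function
`φ′ ≤ φ` which is not identically zero is a constant multiple of `φ`. -/
def IndecFinite (φ : G.V → ℝ≥0∞) : Prop :=
  ∀ φ' : G.V → ℝ≥0∞, G.Harmonic φ' →
    (∀ x, φ' x ≤ φ x) → (∃ x, φ' x ≠ 0) →
    ∃ c : ℝ≥0, ∀ x, φ' x = (c : ℝ≥0∞) * φ x

/-- The number of directed paths from `x` to `y` (the shifted dimension
`dim(x, y)`). -/
noncomputable def gdim (x y : G.V) : ℕ :=
  Nat.card {p : List G.V // p.Chain' G.adj ∧ p.head? = some x ∧ p.getLast? = some y}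

end GradedGraph

end Zigzag

namespace Zigzag

namespace GradedGraph

/-- The graded graph induced on an ideal `I` of `G`. -/
noncomputable def restrict (G : GradedGraph) (I : Set G.V) (hI : G.IsIdeal I) :
    GradedGraph where
  V := {x : G.V // x ∈ I}
  rank x := G.rank x.1
  adj x y := G.adj x.1 y.1
  rank_adj _ _ h := G.rank_adj h
  finLevels n := by
    have : {x : {x : G.V // x ∈ I} | G.rank x.1 = n}
        ⊆ Subtype.val ⁻¹' {x : G.V | G.rank x = n} := fun x hx => hx
    exact Set.Finite.subset
      ((G.finLevels n).preimage (Set.injOn_of_injective Subtype.val_injective)) this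
  outEdge x := by
    obtain ⟨y, hy⟩ := G.outEdge x.1
    exact ⟨⟨y, hI x.1 x.2 y (Relation.ReflTransGen.single hy)⟩, hy⟩

end GradedGraph


namespace GradedGraph

noncomputable instance (G : GradedGraph) (J : Set G.V) (x : G.V) : Decidable (x ∈ J) :=
  Classical.dec _

lemma mem_upFinset {G : GradedGraph} {x y : G.V} : y ∈ G.upFinset x ↔ G.adj x y := by
  simp only [upFinset, Set.Finite.mem_toFinset]
  exact Set.Finite.mem_toFinset _

lemma rank_le_of_le {G : GradedGraph} {x y : G.V} (h : G.le x y) : G.rank x ≤ G.rank y := by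
  induction h with
  | refl => exact le_refl _
  | tail _ hadj ih => have := G.rank_adj hadj; omega

/-- The averaging (push-up) operator. -/
noncomputable def P (G : GradedGraph) (v : G.V → ℝ≥0∞) : G.V → ℝ≥0∞ :=
  fun x => ∑ y ∈ G.upFinset x, v y

lemma harmonic_iff_P {G : GradedGraph} {φ : G.V → ℝ≥0∞} :
    G.Harmonic φ ↔ ∀ x, φ x = G.P φ x := Iff.rfl

/-- Restriction of a function to level `n`. -/
noncomputable def lev (G : GradedGraph) (n : ℕ) (v : G.V → ℝ≥0∞) : G.V → ℝ≥0∞ :=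
  fun x => if G.rank x = n then v x else 0

/-- `S v n x` : result of pushing `x` up to level `n` and pairing against `v` there. -/
noncomputable def S (G : GradedGraph) (v : G.V → ℝ≥0∞) (n : ℕ) (x : G.V) : ℝ≥0∞ :=
  (G.P)^[n - G.rank x] (G.lev n v) x

/-- The minimal extension of data `v`. -/
noncomputable def ExtF (G : GradedGraph) (v : G.V → ℝ≥0∞) : G.V → ℝ≥0∞ :=
  fun x => ⨆ n, G.S v n x

variable {G : GradedGraph}

lemma P_mono {v w : G.V → ℝ≥0∞} (h : ∀ y, v y ≤ w y) (x : G.V) : G.P v x ≤ G.P w x :=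
  Finset.sum_le_sum fun y _ => h y

lemma P_congr_on {K : Set G.V} (hK : G.IsIdeal K) {v w : G.V → ℝ≥0∞}
    (h : ∀ y ∈ K, v y = w y) {x : G.V} (hx : x ∈ K) : G.P v x = G.P w x := by
  refine Finset.sum_congr rfl fun y hy => h y ?_
  exact hK x hx y (Relation.ReflTransGen.single (mem_upFinset.1 hy))

lemma P_add (v w : G.V → ℝ≥0∞) (x : G.V) :
    G.P (fun y => v y + w y) x = G.P v x + G.P w x := Finset.sum_add_distrib

lemma S_of_lt {v : G.V → ℝ≥0∞} {n : ℕ} {x : G.V} (h : n < G.rank x) : G.S v n x = 0 := by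
  have h0 : n - G.rank x = 0 := by omega
  simp only [S, h0, Function.iterate_zero, id, lev]
  rw [if_neg (by omega)]

lemma S_rank {v : G.V → ℝ≥0∞} {x : G.V} : G.S v (G.rank x) x = v x := by
  simp only [S, Nat.sub_self, Function.iterate_zero, id, lev, if_pos]

lemma S_succ {v : G.V → ℝ≥0∞} {n : ℕ} {x : G.V} (h : G.rank x < n) :
    G.S v n x = ∑ y ∈ G.upFinset x, G.S v n y := by
  obtain ⟨k, hk⟩ : ∃ k, n - G.rank x = k + 1 := ⟨n - G.rank x - 1, by omega⟩
  have h1 : G.S v n x = (G.P)^[k+1] (G.lev n v) x := by rw [S, hk]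
  rw [h1, Function.iterate_succ_apply']
  refine Finset.sum_congr rfl fun y hy => ?_
  have hr : G.rank y = G.rank x + 1 := G.rank_adj (mem_upFinset.1 hy)
  have h2 : n - G.rank y = k := by omega
  rw [S, h2]

lemma S_mono_data {v w : G.V → ℝ≥0∞} (h : ∀ y, v y ≤ w y) (n : ℕ) (x : G.V) :
    G.S v n x ≤ G.S w n x := by
  have key : ∀ (k : ℕ) (u u' : G.V → ℝ≥0∞), (∀ y, u y ≤ u' y) → ∀ x,
      (G.P)^[k] u x ≤ (G.P)^[k] u' x := by
    intro k
    induction k with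
    | zero => intro u u' h x; exact h x
    | succ k ih =>
      intro u u' h x
      rw [Function.iterate_succ_apply, Function.iterate_succ_apply]
      exact ih _ _ (fun y => P_mono h y) x
  refine key _ _ _ (fun y => ?_) x
  simp only [lev]; split <;> simp [h y]

lemma S_congr {v w : G.V → ℝ≥0∞} (h : ∀ y, v y = w y) (n : ℕ) (x : G.V) :
    G.S v n x = G.S w n x :=
  le_antisymm (S_mono_data (fun y => (h y).le) n x) (S_mono_data (fun y => (h y).ge) n x)

lemma S_add (v w : G.V → ℝ≥0∞) (n : ℕ) (x : G.V) :
    G.S (fun y => v y + w y) n x = G.S v n x + G.S w n x := by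
  have key : ∀ (k : ℕ) (u u' : G.V → ℝ≥0∞) (x : G.V),
      (G.P)^[k] (fun y => u y + u' y) x = (G.P)^[k] u x + (G.P)^[k] u' x := by
    intro k
    induction k with
    | zero => intro u u' x; rfl
    | succ k ih =>
      intro u u' x
      simp only [Function.iterate_succ_apply]
      have h1 : G.P (fun y => u y + u' y) = fun y => G.P u y + G.P u' y :=
        funext (P_add u u')
      rw [h1]
      exact ih (G.P u) (G.P u') x
  have h2 : G.lev n (fun y => v y + w y) = fun y => G.lev n v y + G.lev n w y := by
    funext z
    simp only [lev]; split <;> simp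
  rw [S, S, S, h2, key]

lemma S_le_superharm {φ v : G.V → ℝ≥0∞} (hφ : ∀ y, G.P φ y ≤ φ y) (hv : ∀ y, v y ≤ φ y)
    (n : ℕ) (x : G.V) : G.S v n x ≤ φ x := by
  have key : ∀ (k : ℕ) (x : G.V), n - G.rank x ≤ k → G.S v n x ≤ φ x := by
    intro k
    induction k with
    | zero =>
      intro x hx
      rcases lt_trichotomy n (G.rank x) with h | h | h
      · rw [S_of_lt h]; exact zero_le
      · subst h; rw [S_rank]; exact hv x
      · omega
    | succ k ih =>
      intro x hx
      rcases lt_trichotomy n (G.rank x) with h | h | h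
      · rw [S_of_lt h]; exact zero_le
      · subst h; rw [S_rank]; exact hv x
      · rw [S_succ h]
        refine le_trans (Finset.sum_le_sum fun y hy => ih y ?_) (hφ x)
        have := G.rank_adj (mem_upFinset.1 hy)
        omega
  exact key _ x le_rfl

lemma S_mono_n {v : G.V → ℝ≥0∞} (hsub : ∀ y, v y ≤ G.P v y) (n : ℕ) (x : G.V) :
    G.S v n x ≤ G.S v (n + 1) x := by
  have key : ∀ (k : ℕ) (x : G.V), n - G.rank x ≤ k → G.S v n x ≤ G.S v (n + 1) x := by
    intro k
    induction k with
    | zero =>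
      intro x hx
      rcases lt_trichotomy n (G.rank x) with h | h | h
      · rw [S_of_lt h]; exact zero_le
      · subst h
        rw [S_rank, S_succ (by omega)]
        refine le_trans (hsub x) (Finset.sum_le_sum fun y hy => ?_)
        have hr : G.rank y = G.rank x + 1 := G.rank_adj (mem_upFinset.1 hy)
        rw [show G.rank x + 1 = G.rank y from hr.symm, ← hr] at *
        rw [← hr, S_rank]
      · omega
    | succ k ih =>
      intro x hx
      rcases lt_trichotomy n (G.rank x) with h | h | h
      · rw [S_of_lt h]; exact zero_le
      · subst h
        rw [S_rank, S_succ (by omega)]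
        refine le_trans (hsub x) (Finset.sum_le_sum fun y hy => ?_)
        have hr : G.rank y = G.rank x + 1 := G.rank_adj (mem_upFinset.1 hy)
        rw [← hr, S_rank]
      · rw [S_succ h, S_succ (by omega : G.rank x < n + 1)]
        refine Finset.sum_le_sum fun y hy => ih y ?_
        have := G.rank_adj (mem_upFinset.1 hy)
        omega
  exact key _ x le_rfl

lemma S_monotone {v : G.V → ℝ≥0∞} (hsub : ∀ y, v y ≤ G.P v y) (x : G.V) :
    Monotone (fun n => G.S v n x) :=
  monotone_nat_of_le_succ fun n => S_mono_n hsub n x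

lemma iSup_shift {f : ℕ → ℝ≥0∞} (hf : Monotone f) (k : ℕ) : ⨆ n, f (n + k) = ⨆ n, f n :=
  le_antisymm (iSup_le fun n => le_iSup f (n + k))
    (iSup_le fun n => le_trans (hf (Nat.le_add_right n k)) (le_iSup (fun n => f (n + k)) n))

lemma S_harmonic_eq {φ : G.V → ℝ≥0∞} (hφ : G.Harmonic φ) {n : ℕ} {x : G.V}
    (h : G.rank x ≤ n) : G.S φ n x = φ x := by
  have key : ∀ (k : ℕ) (x : G.V), G.rank x ≤ n → n - G.rank x ≤ k → G.S φ n x = φ x := by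
    intro k
    induction k with
    | zero =>
      intro x h hk
      have h1 : n = G.rank x := by omega
      subst h1; exact S_rank
    | succ k ih =>
      intro x h hk
      rcases eq_or_lt_of_le h with h' | h'
      · rw [← h']; exact S_rank
      · rw [S_succ h', hφ x]
        refine Finset.sum_congr rfl fun y hy => ?_
        have := G.rank_adj (mem_upFinset.1 hy)
        exact ih y (by omega) (by omega)
  exact key _ x h le_rfl

/-- Data specification: `v` vanishes off an ideal `J` and is harmonic along `J`. -/
structure IsData (G : GradedGraph) (J : Set G.V) (v : G.V → ℝ≥0∞) : Prop where
  ideal : G.IsIdeal J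
  zero : ∀ x ∉ J, v x = 0
  harm : ∀ x ∈ J, v x = G.P v x

lemma IsData.subharm {J : Set G.V} {v : G.V → ℝ≥0∞} (hv : IsData G J v) (x : G.V) :
    v x ≤ G.P v x := by
  by_cases h : x ∈ J
  · exact (hv.harm x h).le
  · rw [hv.zero x h]; exact zero_le

lemma IsData.mem_up {J : Set G.V} {v : G.V → ℝ≥0∞} (hv : IsData G J v) {x y : G.V}
    (hx : x ∈ J) (hy : y ∈ G.upFinset x) : y ∈ J :=
  hv.ideal x hx y (Relation.ReflTransGen.single (mem_upFinset.1 hy))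

lemma S_data_eq {J : Set G.V} {v : G.V → ℝ≥0∞} (hv : IsData G J v) {n : ℕ} {x : G.V}
    (hx : x ∈ J) (h : G.rank x ≤ n) : G.S v n x = v x := by
  have key : ∀ (k : ℕ) (x : G.V), x ∈ J → G.rank x ≤ n → n - G.rank x ≤ k →
      G.S v n x = v x := by
    intro k
    induction k with
    | zero =>
      intro x hx h hk
      have h1 : n = G.rank x := by omega
      subst h1; exact S_rank
    | succ k ih =>
      intro x hx h hk
      rcases eq_or_lt_of_le h with h' | h'
      · rw [← h']; exact S_rank
      · rw [S_succ h', hv.harm x hx]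
        refine Finset.sum_congr rfl fun y hy => ?_
        have := G.rank_adj (mem_upFinset.1 hy)
        exact ih y (hv.mem_up hx hy) (by omega) (by omega)
  exact key _ x hx h le_rfl

lemma ExtF_mem {J : Set G.V} {v : G.V → ℝ≥0∞} (hv : IsData G J v) {x : G.V} (hx : x ∈ J) :
    G.ExtF v x = v x := by
  refine le_antisymm (iSup_le fun n => ?_) ?_
  · rcases lt_or_ge n (G.rank x) with h | h
    · rw [S_of_lt h]; exact zero_le
    · rw [S_data_eq hv hx h]
  · rw [show v x = G.S v (G.rank x) x from S_rank.symm]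
    exact le_iSup (fun n => G.S v n x) (G.rank x)

lemma ExtF_le_superharm {φ v : G.V → ℝ≥0∞} (hφ : ∀ y, G.P φ y ≤ φ y) (hv : ∀ y, v y ≤ φ y)
    (x : G.V) : G.ExtF v x ≤ φ x :=
  iSup_le fun n => S_le_superharm hφ hv n x

lemma ExtF_mono {v w : G.V → ℝ≥0∞} (h : ∀ y, v y ≤ w y) (x : G.V) :
    G.ExtF v x ≤ G.ExtF w x :=
  iSup_mono fun n => S_mono_data h n x

lemma ExtF_harmonic {v : G.V → ℝ≥0∞} (hsub : ∀ y, v y ≤ G.P v y) :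
    G.Harmonic (G.ExtF v) := by
  intro x
  have h1 : G.ExtF v x = ⨆ n, G.S v (n + (G.rank x + 1)) x :=
    (iSup_shift (S_monotone hsub x) (G.rank x + 1)).symm
  rw [h1]
  have h2 : ∀ n : ℕ, G.S v (n + (G.rank x + 1)) x =
      ∑ y ∈ G.upFinset x, G.S v (n + (G.rank x + 1)) y := fun n => S_succ (by omega)
  calc ⨆ n, G.S v (n + (G.rank x + 1)) x
      = ⨆ n, ∑ y ∈ G.upFinset x, G.S v (n + (G.rank x + 1)) y := iSup_congr h2
    _ = ∑ y ∈ G.upFinset x, ⨆ n, G.S v (n + (G.rank x + 1)) y := by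
        refine (ENNReal.finsetSum_iSup_of_monotone fun y => ?_).symm
        intro a b hab
        exact S_monotone hsub y (by omega)
    _ = ∑ y ∈ G.upFinset x, G.ExtF v y :=
        Finset.sum_congr rfl fun y _ => iSup_shift (S_monotone hsub y) (G.rank x + 1)

lemma S_le_of_le {v : G.V → ℝ≥0∞} {x z : G.V} (h : G.le x z) : v z ≤ G.S v (G.rank z) x := by
  induction h using Relation.ReflTransGen.head_induction_on with
  | refl => rw [S_rank]
  | head hadj hle ih =>
    rename_i a b
    have hrb : G.rank b = G.rank a + 1 := G.rank_adj hadj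
    have hz : G.rank a < G.rank z := by
      have := rank_le_of_le hle; omega
    rw [S_succ hz]
    refine le_trans ih (Finset.single_le_sum (fun y _ => zero_le) ?_)
    exact mem_upFinset.2 hadj

lemma ExtF_pos_of_le {v : G.V → ℝ≥0∞} {x z : G.V} (h : G.le x z) : v z ≤ G.ExtF v x :=
  le_trans (S_le_of_le h) (le_iSup (fun n => G.S v n x) (G.rank z))

/-- The finiteness set of a harmonic function is an ideal. -/
lemma finiteness_ideal {φ : G.V → ℝ≥0∞} (hφ : G.Harmonic φ) :
    G.IsIdeal {y | φ y ≠ ⊤} := by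
  intro a ha b hab
  induction hab with
  | refl => exact ha
  | @tail b c hle hadj ih =>
    simp only [Set.mem_setOf_eq] at ih ⊢
    have h1 : (∑ y ∈ G.upFinset b, φ y) ≠ ⊤ := by rw [← hφ b]; exact ih
    exact ENNReal.sum_ne_top.1 h1 c (mem_upFinset.2 hadj)

lemma finite_indicator_data {φ : G.V → ℝ≥0∞} (hφ : G.Harmonic φ) :
    IsData G {y | φ y ≠ ⊤} ({y | φ y ≠ ⊤}.indicator φ) := by
  constructor
  · exact finiteness_ideal hφ
  · intro x hx; exact Set.indicator_of_notMem hx φ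
  · intro x hx
    rw [Set.indicator_of_mem hx, hφ x]
    refine Finset.sum_congr rfl fun y hy => ?_
    have hyF : y ∈ {y | φ y ≠ ⊤} :=
      finiteness_ideal hφ x hx y (Relation.ReflTransGen.single (mem_upFinset.1 hy))
    exact (Set.indicator_of_mem hyF φ).symm

/-- restriction of data to an ideal, as data. -/
lemma indicator_data {φ : G.V → ℝ≥0∞} (hφ : G.Harmonic φ) {J : Set G.V} (hJ : G.IsIdeal J) :
    IsData G J (J.indicator φ) := by
  constructor
  · exact hJ
  · intro x hx; exact Set.indicator_of_notMem hx φ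
  · intro x hx
    rw [Set.indicator_of_mem hx, hφ x]
    refine Finset.sum_congr rfl fun y hy => ?_
    have hyJ : y ∈ J := hJ x hx y (Relation.ReflTransGen.single (mem_upFinset.1 hy))
    exact (Set.indicator_of_mem hyJ φ).symm

end GradedGraph

namespace GradedGraph
variable {G : GradedGraph}

lemma indicator_add_compl (J : Set G.V) (φ : G.V → ℝ≥0∞) (y : G.V) :
    J.indicator φ y + Jᶜ.indicator φ y = φ y := by
  by_cases h : y ∈ J
  · rw [Set.indicator_of_mem h, Set.indicator_of_notMem (by simpa using h)]; ring
  · rw [Set.indicator_of_notMem h, Set.indicator_of_mem (by simpa using h)]; ring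

lemma le_on_of_agree_on_ideal {φ u v : G.V → ℝ≥0∞} (hφ : G.Harmonic φ)
    {J : Set G.V} (hJ : G.IsIdeal J)
    (hval : ∀ y, φ y = G.ExtF (J.indicator φ) y)
    (hu : G.Harmonic u) (hv : G.Harmonic v)
    (hule : ∀ y, u y ≤ φ y) (hvle : ∀ y, v y ≤ φ y)
    (hagree : ∀ y ∈ J, u y = v y) {x : G.V} (hx : φ x ≠ ⊤) : u x ≤ v x := by
  -- the subharmonicity of `J.indicator φ` needs `φ` finite on `J`; from hval & ⊤?
  -- we prove the bound for each n ≥ rank x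
  have hφsup : ∀ y, G.P φ y ≤ φ y := fun y => (hφ y).ge
  have hvsup : ∀ y, G.P v y ≤ v y := fun y => (hv y).ge
  have bound : ∀ n, G.rank x ≤ n →
      u x ≤ v x + (φ x - G.S (J.indicator φ) n x) := by
    intro n hn
    have hdecomp : G.S u n x = G.S (J.indicator u) n x + G.S (Jᶜ.indicator u) n x := by
      rw [← S_add]
      exact S_congr (fun y => (indicator_add_compl J u y).symm) n x
    have hux : u x = G.S u n x := (S_harmonic_eq hu hn).symm
    have h1 : G.S (J.indicator u) n x = G.S (J.indicator v) n x :=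
      S_congr (fun y => by
        by_cases hy : y ∈ J
        · rw [Set.indicator_of_mem hy, Set.indicator_of_mem hy]; exact hagree y hy
        · rw [Set.indicator_of_notMem hy, Set.indicator_of_notMem hy]) n x
    have h2 : G.S (J.indicator v) n x ≤ v x :=
      S_le_superharm hvsup (fun y => Set.indicator_le_self _ _ y) n x
    have h3 : G.S (Jᶜ.indicator u) n x ≤ G.S (Jᶜ.indicator φ) n x :=
      S_mono_data (fun y => Set.indicator_le_indicator (hule y)) n x
    have hφdecomp : G.S (J.indicator φ) n x + G.S (Jᶜ.indicator φ) n x = φ x := by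
      rw [← S_add, S_congr (fun y => indicator_add_compl J φ y) n x]
      exact S_harmonic_eq hφ hn
    have hfin1 : G.S (J.indicator φ) n x ≠ ⊤ := by
      intro htop
      apply hx
      rw [← hφdecomp, htop, top_add]
    have h4 : G.S (Jᶜ.indicator φ) n x = φ x - G.S (J.indicator φ) n x := by
      rw [← hφdecomp]
      rw [ENNReal.add_sub_cancel_left hfin1]
    calc u x = G.S (J.indicator u) n x + G.S (Jᶜ.indicator u) n x := by
          rw [← hdecomp, ← hux]
      _ ≤ G.S (J.indicator v) n x + G.S (Jᶜ.indicator φ) n x := by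
          rw [h1]; exact add_le_add_right h3 _
      _ ≤ v x + (φ x - G.S (J.indicator φ) n x) := by
          rw [h4]; exact add_le_add_left h2 _
  have hmono : Monotone (fun n => G.S (J.indicator φ) n x) := by
    refine S_monotone (fun y => ?_) x
    exact (indicator_data hφ hJ).subharm y
  calc u x ≤ ⨅ n : ℕ, (v x + (φ x - G.S (J.indicator φ) (n + G.rank x) x)) :=
        le_iInf fun n => bound (n + G.rank x) (by omega)
    _ = v x + ⨅ n : ℕ, (φ x - G.S (J.indicator φ) (n + G.rank x) x) := by
        rw [ENNReal.add_iInf]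
    _ = v x + (φ x - ⨆ n : ℕ, G.S (J.indicator φ) (n + G.rank x) x) := by
        rw [ENNReal.sub_iSup hx]
    _ = v x := by
        rw [iSup_shift hmono, show (⨆ n, G.S (J.indicator φ) n x) = φ x from
          (hval x).symm, tsub_self, add_zero]

lemma agree_of_agree_on_ideal {φ u v : G.V → ℝ≥0∞} (hφ : G.Harmonic φ)
    {J : Set G.V} (hJ : G.IsIdeal J)
    (hval : ∀ y, φ y = G.ExtF (J.indicator φ) y)
    (hu : G.Harmonic u) (hv : G.Harmonic v)
    (hule : ∀ y, u y ≤ φ y) (hvle : ∀ y, v y ≤ φ y)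
    (hagree : ∀ y ∈ J, u y = v y) {x : G.V} (hx : φ x ≠ ⊤) : u x = v x :=
  le_antisymm
    (le_on_of_agree_on_ideal hφ hJ hval hu hv hule hvle hagree hx)
    (le_on_of_agree_on_ideal hφ hJ hval hv hu hvle hule (fun y hy => (hagree y hy).symm) hx)

end GradedGraph

namespace GradedGraph
variable {G : GradedGraph}

lemma kmk_eq_mkQ : G.kmk = G.Krel.mkQ := rfl

lemma relOf_mem_Krel (x : G.V) : G.relOf x ∈ G.Krel :=
  Submodule.subset_span (Set.mem_range_self x)

lemma kmk_eq_iff {f g : G.V →₀ ℝ} : G.kmk f = G.kmk g ↔ f - g ∈ G.Krel :=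
  Submodule.Quotient.eq G.Krel

lemma kmk_single_eq_sum_up (x : G.V) :
    G.kmk (Finsupp.single x 1) = G.kmk (∑ y ∈ G.upFinset x, Finsupp.single y 1) := by
  rw [kmk_eq_iff]
  exact relOf_mem_Krel x

/-- Iterated push-up of a vertex in the free module. -/
noncomputable def D (G : GradedGraph) : ℕ → G.V → (G.V →₀ ℝ)
  | 0, x => Finsupp.single x 1
  | (k+1), x => ∑ y ∈ G.upFinset x, G.D k y

lemma D_nonneg (k : ℕ) (x : G.V) (μ : G.V) : 0 ≤ G.D k x μ := by
  induction k generalizing x μ with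
  | zero =>
    rw [D]
    by_cases h : x = μ <;> simp [Finsupp.single_apply, h]
  | succ k ih =>
    rw [D, Finset.sum_apply']
    exact Finset.sum_nonneg fun y _ => ih y μ

lemma D_kmk (k : ℕ) (x : G.V) : G.kmk (G.D k x) = G.kmk (Finsupp.single x 1) := by
  induction k generalizing x with
  | zero => rfl
  | succ k ih =>
    rw [D, kmk_eq_mkQ, map_sum, ← kmk_eq_mkQ]
    have h1 : ∀ y ∈ G.upFinset x, G.kmk (G.D k y) = G.kmk (Finsupp.single y 1) :=
      fun y _ => ih y
    rw [kmk_eq_mkQ] at h1 ⊢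
    rw [Finset.sum_congr rfl h1, ← map_sum, ← kmk_eq_mkQ, ← kmk_single_eq_sum_up]

lemma D_rank {k : ℕ} {x μ : G.V} (h : G.D k x μ ≠ 0) : G.rank μ = G.rank x + k := by
  induction k generalizing x with
  | zero =>
    simp only [D, Finsupp.single_apply] at h
    rcases eq_or_ne x μ with rfl | hne
    · omega
    · simp [hne] at h
  | succ k ih =>
    rw [D, Finset.sum_apply'] at h
    obtain ⟨y, hy, hne⟩ : ∃ y ∈ G.upFinset x, G.D k y μ ≠ 0 := by
      by_contra hc
      push_neg at hc
      exact h (Finset.sum_eq_zero hc)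
    have := G.rank_adj (mem_upFinset.1 hy)
    have := ih hne
    omega

lemma phiHat_eq_sum_subset {w : G.V → ℝ≥0∞} {f : G.V →₀ ℝ} {T : Finset G.V}
    (hT : f.support ⊆ T) :
    G.phiHat w f = ∑ x ∈ T, ENNReal.ofReal (f x) * w x := by
  refine Finset.sum_subset hT fun x _ hx => ?_
  rw [Finsupp.notMem_support_iff.1 hx]
  simp

lemma phiHat_add {w : G.V → ℝ≥0∞} {f g : G.V →₀ ℝ} (hf : ∀ x, 0 ≤ f x) (hg : ∀ x, 0 ≤ g x) :
    G.phiHat w (f + g) = G.phiHat w f + G.phiHat w g := by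
  classical
  have hT : (f + g).support ⊆ f.support ∪ g.support := Finsupp.support_add
  rw [phiHat_eq_sum_subset hT,
    phiHat_eq_sum_subset (Finset.subset_union_left : f.support ⊆ f.support ∪ g.support),
    phiHat_eq_sum_subset (Finset.subset_union_right : g.support ⊆ f.support ∪ g.support),
    ← Finset.sum_add_distrib]
  refine Finset.sum_congr rfl fun x _ => ?_
  rw [Finsupp.add_apply, ENNReal.ofReal_add (hf x) (hg x), add_mul]

lemma phiHat_smul {w : G.V → ℝ≥0∞} {f : G.V →₀ ℝ} {c : ℝ} (hc : 0 ≤ c) :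
    G.phiHat w (c • f) = ENNReal.ofReal c * G.phiHat w f := by
  have hT : (c • f).support ⊆ f.support := Finsupp.support_smul
  rw [phiHat_eq_sum_subset hT, phiHat, Finset.mul_sum]
  refine Finset.sum_congr rfl fun x _ => ?_
  rw [Finsupp.smul_apply, smul_eq_mul, ENNReal.ofReal_mul hc, mul_assoc]

lemma phiHat_single {w : G.V → ℝ≥0∞} {x : G.V} {r : ℝ} :
    G.phiHat w (Finsupp.single x r) = ENNReal.ofReal r * w x := by
  rcases eq_or_ne r 0 with rfl | hr
  · simp [phiHat]
  · rw [phiHat, Finsupp.support_single_ne_zero x hr, Finset.sum_singleton,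
      Finsupp.single_eq_same]

lemma phiHat_finsetSum {w : G.V → ℝ≥0∞} {ι : Type*} {s : Finset ι} {F : ι → (G.V →₀ ℝ)}
    (hF : ∀ i ∈ s, ∀ x, 0 ≤ F i x) :
    G.phiHat w (∑ i ∈ s, F i) = ∑ i ∈ s, G.phiHat w (F i) := by
  classical
  induction s using Finset.induction_on with
  | empty => simp [phiHat]
  | insert a s hni ih =>
    rw [Finset.sum_insert hni, Finset.sum_insert hni,
      phiHat_add (hF a (Finset.mem_insert_self a s)) (fun x => ?_),
      ih (fun i hi => hF i (Finset.mem_insert_of_mem hi))]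
    rw [Finset.sum_apply']
    exact Finset.sum_nonneg fun i hi => hF i (Finset.mem_insert_of_mem hi) x

lemma phiHat_D {w : G.V → ℝ≥0∞} {k : ℕ} {x : G.V} :
    G.phiHat w (G.D k x) = (G.P)^[k] w x := by
  induction k generalizing x with
  | zero => simp [D, phiHat_single]
  | succ k ih =>
    rw [D, phiHat_finsetSum (fun y _ μ => D_nonneg k y μ), Function.iterate_succ_apply']
    exact Finset.sum_congr rfl fun y _ => ih

lemma phiHat_S {v : G.V → ℝ≥0∞} {n : ℕ} {x : G.V} :
    G.phiHat (G.lev n v) (G.D (n - G.rank x) x) = G.S v n x := phiHat_D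

end GradedGraph

namespace GradedGraph
variable {G : GradedGraph}

lemma S_ne_top {v : G.V → ℝ≥0∞} (hvfin : ∀ y, v y ≠ ⊤) (n : ℕ) (x : G.V) :
    G.S v n x ≠ ⊤ := by
  have key : ∀ (k : ℕ) (x : G.V), n - G.rank x ≤ k → G.S v n x ≠ ⊤ := by
    intro k
    induction k with
    | zero =>
      intro x hx
      rcases lt_trichotomy n (G.rank x) with h | h | h
      · rw [S_of_lt h]; exact ENNReal.zero_ne_top
      · rw [h, S_rank]; exact hvfin x
      · omega
    | succ k ih =>
      intro x hx
      rcases lt_trichotomy n (G.rank x) with h | h | h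
      · rw [S_of_lt h]; exact ENNReal.zero_ne_top
      · rw [h, S_rank]; exact hvfin x
      · rw [S_succ h]
        refine ENNReal.sum_ne_top.2 fun y hy => ih y ?_
        have := G.rank_adj (mem_upFinset.1 hy)
        omega
  exact key _ x le_rfl

/-- The level-`n` evaluation functional. -/
noncomputable def lam (G : GradedGraph) (v : G.V → ℝ≥0∞) (n : ℕ) : (G.V →₀ ℝ) →ₗ[ℝ] ℝ :=
  Finsupp.linearCombination ℝ (fun y => (G.S v n y).toReal)

lemma lam_apply {v : G.V → ℝ≥0∞} {n : ℕ} {g : G.V →₀ ℝ} :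
    G.lam v n g = ∑ x ∈ g.support, g x * (G.S v n x).toReal := by
  simp [lam, Finsupp.linearCombination_apply, Finsupp.sum, smul_eq_mul]

lemma lam_single {v : G.V → ℝ≥0∞} {n : ℕ} {x : G.V} {r : ℝ} :
    G.lam v n (Finsupp.single x r) = r * (G.S v n x).toReal := by
  simp [lam, Finsupp.linearCombination_single, smul_eq_mul]

lemma lam_relOf {v : G.V → ℝ≥0∞} (hvfin : ∀ y, v y ≠ ⊤) {n : ℕ} {x : G.V}
    (h : G.rank x < n) : G.lam v n (G.relOf x) = 0 := by
  rw [relOf, map_sub, map_sum, lam_single, one_mul]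
  have h1 : ∀ y ∈ G.upFinset x, G.lam v n (Finsupp.single y 1) = (G.S v n y).toReal := by
    intro y _
    rw [lam_single, one_mul]
  rw [Finset.sum_congr rfl h1, ← ENNReal.toReal_sum (fun y hy => S_ne_top hvfin n y),
    ← S_succ h, sub_self]

lemma lam_nonneg {v : G.V → ℝ≥0∞} {n : ℕ} {g : G.V →₀ ℝ} (hg : ∀ x, 0 ≤ g x) :
    0 ≤ G.lam v n g := by
  rw [lam_apply]
  exact Finset.sum_nonneg fun x _ => mul_nonneg (hg x) ENNReal.toReal_nonneg

lemma ofReal_lam {v : G.V → ℝ≥0∞} (hvfin : ∀ y, v y ≠ ⊤) {n : ℕ} {g : G.V →₀ ℝ}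
    (hg : ∀ x, 0 ≤ g x) :
    ENNReal.ofReal (G.lam v n g) = G.phiHat (fun y => G.S v n y) g := by
  rw [lam_apply, ENNReal.ofReal_sum_of_nonneg
    (fun x _ => mul_nonneg (hg x) ENNReal.toReal_nonneg), phiHat]
  refine Finset.sum_congr rfl fun x _ => ?_
  rw [ENNReal.ofReal_mul (hg x), ENNReal.ofReal_toReal (S_ne_top hvfin n x)]

lemma lam_krel {v : G.V → ℝ≥0∞} (hvfin : ∀ y, v y ≠ ⊤) {u : G.V →₀ ℝ} (hu : u ∈ G.Krel) :
    ∃ N, ∀ n, N < n → G.lam v n u = 0 := by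
  obtain ⟨c, hc⟩ := Finsupp.mem_span_range_iff_exists_finsupp.1 hu
  refine ⟨c.support.sup G.rank, fun n hn => ?_⟩
  rw [← hc, map_finsuppSum, Finsupp.sum]
  refine Finset.sum_eq_zero fun i hi => ?_
  have hri : G.rank i ≤ c.support.sup G.rank := Finset.le_sup hi
  rw [map_smul, lam_relOf hvfin (by omega), smul_zero]

lemma Lsum_monotone {J : Set G.V} {v : G.V → ℝ≥0∞} (hv : IsData G J v) {g : G.V →₀ ℝ} :
    Monotone (fun n => G.phiHat (fun y => G.S v n y) g) := by
  refine monotone_nat_of_le_succ fun n => Finset.sum_le_sum fun x _ => ?_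
  exact mul_le_mul_right (S_mono_n hv.subharm n x) _

lemma phiHat_ExtF {J : Set G.V} {v : G.V → ℝ≥0∞} (hv : IsData G J v) {g : G.V →₀ ℝ} :
    G.phiHat (G.ExtF v) g = ⨆ n, G.phiHat (fun y => G.S v n y) g := by
  rw [phiHat]
  have h1 : ∀ x ∈ g.support,
      ENNReal.ofReal (g x) * G.ExtF v x = ⨆ n, ENNReal.ofReal (g x) * G.S v n x := by
    intro x _
    rw [ExtF, ENNReal.mul_iSup]
  rw [Finset.sum_congr rfl h1]
  rw [ENNReal.finsetSum_iSup_of_monotone fun x => ?_]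
  · rfl
  · intro a b hab
    exact mul_le_mul_right (S_monotone hv.subharm x hab) _

/-- Monotonicity of the extension pairing along the cone order. -/
lemma phiHat_ExtF_le_of_leK {J : Set G.V} {v : G.V → ℝ≥0∞} (hv : IsData G J v)
    (hvfin : ∀ y, v y ≠ ⊤) {f g : G.V →₀ ℝ} (hf : ∀ x, 0 ≤ f x) (hg : ∀ x, 0 ≤ g x)
    (hle : G.leK (G.kmk g) (G.kmk f)) :
    G.phiHat (G.ExtF v) g ≤ ⨆ n, G.phiHat (fun y => G.S v n y) f := by
  obtain ⟨h, hh0, hkmk⟩ := hle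
  have hkmk2 : G.kmk h = G.kmk (f - g) := by
    rw [hkmk, kmk_eq_mkQ, map_sub]
  have hmem : h - (f - g) ∈ G.Krel := kmk_eq_iff.1 hkmk2
  obtain ⟨N, hN⟩ := lam_krel hvfin hmem
  have hlam : ∀ n, N < n → G.lam v n g ≤ G.lam v n f := by
    intro n hn
    have h0 := hN n hn
    rw [map_sub, map_sub] at h0
    have h2 : 0 ≤ G.lam v n h := lam_nonneg hh0
    linarith
  rw [phiHat_ExtF hv, ← iSup_shift (Lsum_monotone hv (g := g)) (N + 1)]
  refine iSup_le fun n => ?_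
  have h3 : G.phiHat (fun y => G.S v (n + (N+1)) y) g ≤
      G.phiHat (fun y => G.S v (n + (N+1)) y) f := by
    rw [← ofReal_lam hvfin hg, ← ofReal_lam hvfin hf]
    exact ENNReal.ofReal_le_ofReal (hlam _ (by omega))
  refine h3.trans ?_
  exact le_iSup (fun n => G.phiHat (fun y => G.S v n y) f) (n + (N+1))

end GradedGraph

namespace GradedGraph
variable {G : GradedGraph}

lemma single_one_nonneg {x : G.V} : ∀ y, 0 ≤ (Finsupp.single x (1:ℝ)) y := by
  classical
  intro y
  rw [Finsupp.single_apply]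
  split <;> norm_num

lemma Lsum_ne_top {v : G.V → ℝ≥0∞} (hvfin : ∀ y, v y ≠ ⊤) {n : ℕ} {f : G.V →₀ ℝ} :
    G.phiHat (fun y => G.S v n y) f ≠ ⊤ :=
  ENNReal.sum_ne_top.2 fun x _ =>
    ENNReal.mul_ne_top ENNReal.ofReal_ne_top (S_ne_top hvfin n x)

/-- Pushing a nonnegative vector to level `m` and keeping only the part inside `J`. -/
lemma exists_approx {J : Set G.V} {v : G.V → ℝ≥0∞} (hv : IsData G J v)
    {f : G.V →₀ ℝ} (hf : ∀ x, 0 ≤ f x) {m : ℕ} (hm : ∀ x ∈ f.support, G.rank x ≤ m) :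
    ∃ g : G.V →₀ ℝ, (∀ x, 0 ≤ g x) ∧ G.leK (G.kmk g) (G.kmk f) ∧
      G.phiHat (G.ExtF v) g = G.phiHat (fun y => G.S v m y) f := by
  classical
  set Fn : G.V →₀ ℝ := ∑ x ∈ f.support, f x • G.D (m - G.rank x) x with hFn
  have hFn0 : ∀ μ, 0 ≤ Fn μ := by
    intro μ
    rw [hFn, Finset.sum_apply']
    exact Finset.sum_nonneg fun x hx => by
      rw [Finsupp.smul_apply, smul_eq_mul]
      exact mul_nonneg (hf x) (D_nonneg _ x μ)
  have hFnrank : ∀ μ ∈ Fn.support, G.rank μ = m := by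
    intro μ hμ
    rw [Finsupp.mem_support_iff, hFn, Finset.sum_apply'] at hμ
    obtain ⟨x, hx, hne⟩ : ∃ x ∈ f.support, (f x • G.D (m - G.rank x) x) μ ≠ 0 := by
      by_contra hc
      push_neg at hc
      exact hμ (Finset.sum_eq_zero hc)
    rw [Finsupp.smul_apply, smul_eq_mul] at hne
    have hD : G.D (m - G.rank x) x μ ≠ 0 := fun h => hne (by rw [h, mul_zero])
    have := D_rank hD
    have := hm x hx
    omega
  have hkmkFn : G.kmk Fn = G.kmk f := by
    rw [hFn, kmk_eq_mkQ, map_sum]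
    have h1 : ∀ x ∈ f.support,
        G.Krel.mkQ (f x • G.D (m - G.rank x) x) = G.Krel.mkQ (Finsupp.single x (f x)) := by
      intro x _
      rw [map_smul, ← kmk_eq_mkQ, D_kmk, kmk_eq_mkQ, ← map_smul]
      congr 1
      rw [Finsupp.smul_single, smul_eq_mul, mul_one]
    rw [Finset.sum_congr rfl h1, ← map_sum]
    congr 1
    exact Finsupp.sum_single f
  set g : G.V →₀ ℝ := Fn.filter (· ∈ J) with hg
  set h : G.V →₀ ℝ := Fn.filter (fun μ => ¬ μ ∈ J) with hh
  have hsplit : g + h = Fn := Finsupp.filter_pos_add_filter_neg Fn _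
  have hg0 : ∀ μ, 0 ≤ g μ := by
    intro μ
    rw [hg, Finsupp.filter_apply]
    split
    · exact hFn0 μ
    · exact le_refl _
  have hh0 : ∀ μ, 0 ≤ h μ := by
    intro μ
    rw [hh, Finsupp.filter_apply]
    split
    · exact hFn0 μ
    · exact le_refl _
  have hf2 : G.kmk f = G.kmk g + G.kmk h := by
    rw [← hkmkFn, ← hsplit, kmk_eq_mkQ, map_add]
  refine ⟨g, hg0, ?_, ?_⟩
  · refine ⟨h, hh0, ?_⟩
    rw [hf2]
    abel
  · have hsupg : ∀ μ ∈ g.support, μ ∈ Fn.support ∧ μ ∈ J := by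
      intro μ hμ
      rw [hg, Finsupp.support_filter, Finset.mem_filter] at hμ
      exact hμ
    have e1 : G.phiHat (G.ExtF v) g = G.phiHat (G.lev m v) g := by
      rw [phiHat, phiHat]
      refine Finset.sum_congr rfl fun μ hμ => ?_
      have hμJ := (hsupg μ hμ).2
      have hμm := hFnrank μ (hsupg μ hμ).1
      rw [ExtF_mem hv hμJ, lev, if_pos hμm]
    have e2 : G.phiHat (G.lev m v) h = 0 := by
      rw [phiHat]
      refine Finset.sum_eq_zero fun μ hμ => ?_
      have hμJ : ¬ μ ∈ J := by
        rw [hh, Finsupp.support_filter, Finset.mem_filter] at hμ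
        exact hμ.2
      have : G.lev m v μ = 0 := by
        rw [lev]
        split
        · exact hv.zero μ hμJ
        · rfl
      rw [this, mul_zero]
    have e3 : G.phiHat (G.lev m v) Fn = G.phiHat (fun y => G.S v m y) f := by
      rw [hFn, phiHat_finsetSum (fun x hx μ => by
        rw [Finsupp.smul_apply, smul_eq_mul]
        exact mul_nonneg (hf x) (D_nonneg _ x μ))]
      rw [phiHat]
      refine Finset.sum_congr rfl fun x hx => ?_
      rw [phiHat_smul (hf x), phiHat_S]
    have e4 : G.phiHat (G.lev m v) Fn =
        G.phiHat (G.lev m v) g + G.phiHat (G.lev m v) h := by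
      rw [← hsplit, phiHat_add hg0 hh0]
    rw [e1, ← e3, e4, e2, add_zero]

/-- **Lemma S**: the minimal extension of finite data from an ideal is semifinite
(provided it takes an infinite value). -/
lemma semifinite_ext {J : Set G.V} {v : G.V → ℝ≥0∞} (hv : IsData G J v)
    (hvfin : ∀ y, v y ≠ ⊤) (htop : ∃ x, G.ExtF v x = ⊤) : G.Semifinite (G.ExtF v) := by
  refine ⟨htop, fun f hf => le_antisymm ?_ ?_⟩
  · rw [phiHat_ExtF hv, ← iSup_shift (Lsum_monotone hv) (f.support.sup G.rank)]
    refine iSup_le fun n => ?_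
    obtain ⟨g, hg0, hgle, hgeq⟩ := exists_approx hv hf
      (m := n + f.support.sup G.rank)
      (fun x hx => le_trans (Finset.le_sup hx) (by omega))
    have hne : G.phiHat (G.ExtF v) g ≠ ⊤ := by
      rw [hgeq]; exact Lsum_ne_top hvfin
    rw [← hgeq]
    exact le_iSup₂_of_le g ⟨hg0, hgle, hne⟩ le_rfl
  · refine iSup₂_le fun g hg => ?_
    obtain ⟨hg0, hgle, -⟩ := hg
    calc G.phiHat (G.ExtF v) g ≤ ⨆ n, G.phiHat (fun y => G.S v n y) f :=
          phiHat_ExtF_le_of_leK hv hvfin hf hg0 hgle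
      _ = G.phiHat (G.ExtF v) f := (phiHat_ExtF hv).symm

lemma indicator_finiteness_ne_top {φ : G.V → ℝ≥0∞} :
    ∀ y, ({y | φ y ≠ ⊤}.indicator φ) y ≠ ⊤ := by
  intro y
  by_cases h : φ y ≠ ⊤
  · rw [Set.indicator_of_mem (show y ∈ {y | φ y ≠ ⊤} from h) φ]; exact h
  · rw [Set.indicator_of_notMem (show y ∉ {y | φ y ≠ ⊤} from h) φ]
    exact ENNReal.zero_ne_top

/-- **Lemma T** (structure theorem): a semifinite harmonic function is the minimal
extension of its restriction to its finiteness ideal. -/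
lemma semifinite_structure {φ : G.V → ℝ≥0∞} (hφh : G.Harmonic φ) (hφ : G.Semifinite φ)
    (x : G.V) : φ x = G.ExtF ({y | φ y ≠ ⊤}.indicator φ) x := by
  set v := {y | φ y ≠ ⊤}.indicator φ with hvdef
  have hv : IsData G {y | φ y ≠ ⊤} v := finite_indicator_data hφh
  have hvfin : ∀ y, v y ≠ ⊤ := indicator_finiteness_ne_top
  by_cases hx : φ x ≠ ⊤
  · rw [ExtF_mem hv (show x ∈ {y | φ y ≠ ⊤} from hx), hvdef,
      Set.indicator_of_mem (show x ∈ {y | φ y ≠ ⊤} from hx) φ]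
  · push_neg at hx
    have hbound : ∀ g ∈ {g : G.V →₀ ℝ | (∀ y, 0 ≤ g y) ∧
        G.leK (G.kmk g) (G.kmk (Finsupp.single x 1)) ∧ G.phiHat φ g ≠ ⊤},
        G.phiHat φ g ≤ G.ExtF v x := by
      rintro g ⟨hg0, hgle, hgne⟩
      have hsupF : ∀ μ ∈ g.support, φ μ ≠ ⊤ := by
        intro μ hμ htop
        apply hgne
        have hterm : ENNReal.ofReal (g μ) * φ μ = ⊤ := by
          rw [htop]
          refine ENNReal.mul_top ?_
          refine (ENNReal.ofReal_pos.2 ?_).ne'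
          exact lt_of_le_of_ne (hg0 μ) (Ne.symm (Finsupp.mem_support_iff.1 hμ))
        have hterm_le : ENNReal.ofReal (g μ) * φ μ ≤ G.phiHat φ g :=
          Finset.single_le_sum (f := fun x => ENNReal.ofReal (g x) * φ x)
            (fun y _ => zero_le) hμ
        rw [eq_top_iff, ← hterm]
        exact hterm_le
      have e1 : G.phiHat φ g = G.phiHat (G.ExtF v) g := by
        rw [phiHat, phiHat]
        refine Finset.sum_congr rfl fun μ hμ => ?_
        rw [ExtF_mem hv (show μ ∈ {y | φ y ≠ ⊤} from hsupF μ hμ), hvdef,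
          Set.indicator_of_mem (show μ ∈ {y | φ y ≠ ⊤} from hsupF μ hμ) φ]
      rw [e1]
      refine (phiHat_ExtF_le_of_leK hv hvfin single_one_nonneg hg0 hgle).trans ?_
      refine iSup_le fun n => ?_
      rw [phiHat_single, ENNReal.ofReal_one, one_mul]
      exact le_iSup (fun n => G.S v n x) n
    have h1 : G.phiHat φ (Finsupp.single x 1) = ⊤ := by
      rw [phiHat_single, ENNReal.ofReal_one, one_mul, hx]
    have h2 := hφ.2 (Finsupp.single x 1) single_one_nonneg
    rw [h1] at h2
    have h3 : (⊤ : ℝ≥0∞) ≤ G.ExtF v x := by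
      rw [h2]
      exact iSup₂_le hbound
    rw [hx, top_le_iff.1 h3]

end GradedGraph

namespace GradedGraph
variable {G : GradedGraph}

/-- Extension of a function on an ideal by zero. -/
noncomputable def extend (K : Set G.V) (w : {y : G.V // y ∈ K} → ℝ≥0∞) : G.V → ℝ≥0∞ :=
  fun x => if h : x ∈ K then w ⟨x, h⟩ else 0

lemma extend_val {K : Set G.V} (w : {y : G.V // y ∈ K} → ℝ≥0∞) (z : {y : G.V // y ∈ K}) :
    extend K w z.1 = w z := by
  rw [extend, dif_pos z.2]

lemma sum_up_restrict {K : Set G.V} {hK : G.IsIdeal K} (x : (G.restrict K hK).V)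
    (F : G.V → ℝ≥0∞) :
    ∑ z ∈ (G.restrict K hK).upFinset x, F z.1 = ∑ y ∈ G.upFinset x.1, F y := by
  refine Finset.sum_bij' (fun z _ => z.1)
    (fun y hy => ⟨y, hK x.1 x.2 y (Relation.ReflTransGen.single (mem_upFinset.1 hy))⟩)
    ?_ ?_ ?_ ?_ ?_
  · intro z hz
    exact mem_upFinset.2 ((mem_upFinset (G := G.restrict K hK)).1 hz)
  · intro y hy
    have hadj : G.adj x.1 y := mem_upFinset.1 hy
    exact (mem_upFinset (G := G.restrict K hK)).2 hadj
  · intro z hz; rfl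
  · intro y hy; rfl
  · intro z hz; rfl

lemma P_restrict {K : Set G.V} {hK : G.IsIdeal K} (w : (G.restrict K hK).V → ℝ≥0∞)
    (x : (G.restrict K hK).V) :
    (G.restrict K hK).P w x = G.P (extend K w) x.1 := by
  rw [P, P, ← sum_up_restrict x (extend K w)]
  exact Finset.sum_congr rfl fun z _ => (extend_val w z).symm

lemma S_restrict {K : Set G.V} {hK : G.IsIdeal K} (v : G.V → ℝ≥0∞) (n : ℕ)
    (x0 : (G.restrict K hK).V) :
    (G.restrict K hK).S (fun z => v z.1) n x0 = G.S v n x0.1 := by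
  have key : ∀ (k : ℕ) (x : (G.restrict K hK).V), n - G.rank x.1 ≤ k →
      (G.restrict K hK).S (fun z => v z.1) n x = G.S v n x.1 := by
    intro k
    induction k with
    | zero =>
      intro x hx
      rcases lt_trichotomy n (G.rank x.1) with h | h | h
      · rw [S_of_lt h, S_of_lt (show n < (G.restrict K hK).rank x from h)]
      · rw [h]
        rw [show G.rank x.1 = (G.restrict K hK).rank x from rfl]
        rw [S_rank, show (G.restrict K hK).rank x = G.rank x.1 from rfl, S_rank]
      · omega
    | succ k ih =>
      intro x hx
      rcases lt_trichotomy n (G.rank x.1) with h | h | h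
      · rw [S_of_lt h, S_of_lt (show n < (G.restrict K hK).rank x from h)]
      · rw [h]
        rw [show G.rank x.1 = (G.restrict K hK).rank x from rfl]
        rw [S_rank, show (G.restrict K hK).rank x = G.rank x.1 from rfl, S_rank]
      · rw [S_succ h, S_succ (show (G.restrict K hK).rank x < n from h)]
        rw [← sum_up_restrict x (fun y => G.S v n y)]
        refine Finset.sum_congr rfl fun z hz => ?_
        refine ih z ?_
        have : (G.restrict K hK).rank z = (G.restrict K hK).rank x + 1 := (G.restrict K hK).rank_adj (mem_upFinset.1 hz)
        have h2 : G.rank z.1 = G.rank x.1 + 1 := this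
        omega
  exact key _ x0 le_rfl

lemma ExtF_restrict {K : Set G.V} {hK : G.IsIdeal K} (v : G.V → ℝ≥0∞)
    (x : (G.restrict K hK).V) :
    (G.restrict K hK).ExtF (fun z => v z.1) x = G.ExtF v x.1 :=
  iSup_congr fun n => S_restrict v n x

lemma harmonic_restrict {K : Set G.V} {hK : G.IsIdeal K} {φ : G.V → ℝ≥0∞}
    (hφ : G.Harmonic φ) : (G.restrict K hK).Harmonic (fun z => φ z.1) := by
  intro x
  have h1 : φ x.1 = ∑ y ∈ G.upFinset x.1, φ y := hφ x.1
  rw [show (∑ z ∈ (G.restrict K hK).upFinset x, φ z.1)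
      = ∑ y ∈ G.upFinset x.1, φ y from sum_up_restrict x φ]
  exact h1

lemma le_restrict {K : Set G.V} {hK : G.IsIdeal K} {x y : G.V} (hx : x ∈ K)
    (h : G.le x y) : ∀ hy : y ∈ K, (G.restrict K hK).le ⟨x, hx⟩ ⟨y, hy⟩ := by
  induction h with
  | refl => intro hy; exact Relation.ReflTransGen.refl
  | @tail b c hxb hbc ih =>
    intro hy
    have hb : b ∈ K := hK x hx b hxb
    exact Relation.ReflTransGen.tail (ih hb) hbc

lemma le_of_restrict {K : Set G.V} {hK : G.IsIdeal K} {a b : (G.restrict K hK).V}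
    (h : (G.restrict K hK).le a b) : G.le a.1 b.1 := by
  induction h with
  | refl => exact Relation.ReflTransGen.refl
  | tail _ hbc ih => exact Relation.ReflTransGen.tail ih hbc

/-- Lift an ideal of the restricted graph to an ideal of the ambient graph. -/
def liftSet (K : Set G.V) (J' : Set {y : G.V // y ∈ K}) : Set G.V :=
  {x : G.V | ∃ h : x ∈ K, (⟨x, h⟩ : {y : G.V // y ∈ K}) ∈ J'}

lemma liftSet_ideal {K : Set G.V} {hK : G.IsIdeal K} {J' : Set (G.restrict K hK).V}
    (hJ' : (G.restrict K hK).IsIdeal J') : G.IsIdeal (liftSet K J') := by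
  rintro a ⟨ha, haJ⟩ b hab
  have hb : b ∈ K := hK a ha b hab
  exact ⟨hb, hJ' ⟨a, ha⟩ haJ ⟨b, hb⟩ (le_restrict ha hab hb)⟩

lemma extend_data {K : Set G.V} {hK : G.IsIdeal K} {J' : Set (G.restrict K hK).V}
    {w : (G.restrict K hK).V → ℝ≥0∞} (hw : IsData (G.restrict K hK) J' w) :
    IsData G (liftSet K J') (extend K w) := by
  constructor
  · exact liftSet_ideal hw.ideal
  · intro x hx
    unfold extend
    split
    · rename_i h
      refine hw.zero _ fun hmem => hx ⟨h, hmem⟩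
    · rfl
  · rintro x ⟨hxK, hxJ⟩
    rw [show extend K w x = w ⟨x, hxK⟩ from dif_pos hxK, hw.harm _ hxJ]
    exact P_restrict w ⟨x, hxK⟩

lemma extend_ExtF {K : Set G.V} {hK : G.IsIdeal K} (w : (G.restrict K hK).V → ℝ≥0∞)
    (x : (G.restrict K hK).V) :
    (G.restrict K hK).ExtF w x = G.ExtF (extend K w) x.1 := by
  rw [← ExtF_restrict (extend K w) x]
  congr 1
  funext z
  exact (extend_val w z).symm

end GradedGraph

namespace GradedGraph
variable {G : GradedGraph}

lemma zero_harmonic : G.Harmonic (fun _ => 0) := by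
  intro x
  rw [Finset.sum_const_zero]

lemma smul_harmonic {φ : G.V → ℝ≥0∞} (hφ : G.Harmonic φ) (c : ℝ≥0∞) :
    G.Harmonic (fun y => c * φ y) := by
  intro x
  rw [← Finset.mul_sum, ← hφ x]

lemma coe_eq_one_of_mul {c : ℝ≥0} {a : ℝ≥0∞} (h : (c : ℝ≥0∞) * a = a) (h0 : a ≠ 0)
    (ht : a ≠ ⊤) : (c : ℝ≥0∞) = 1 := by
  have h1 : (c : ℝ≥0∞) * a = 1 * a := by rw [h, one_mul]
  exact le_antisymm ((ENNReal.mul_le_mul_iff_left h0 ht).1 h1.le)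
    ((ENNReal.mul_le_mul_iff_left h0 ht).1 h1.ge)

lemma coe_le_one_of_mul {c : ℝ≥0} {a : ℝ≥0∞} (h : (c : ℝ≥0∞) * a ≤ a) (h0 : a ≠ 0)
    (ht : a ≠ ⊤) : (c : ℝ≥0∞) ≤ 1 := by
  have h1 : (c : ℝ≥0∞) * a ≤ 1 * a := by rw [one_mul]; exact h
  exact (ENNReal.mul_le_mul_iff_left h0 ht).1 h1

lemma smul_le_of_coe_le_one {c : ℝ≥0} {φ : G.V → ℝ≥0∞} (hc : (c : ℝ≥0∞) ≤ 1) (y : G.V) :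
    (c : ℝ≥0∞) * φ y ≤ φ y := by
  calc (c : ℝ≥0∞) * φ y ≤ 1 * φ y := mul_le_mul_left hc _
    _ = φ y := one_mul _

/-- In a primitive graph, every nonempty ideal is cofinal. -/
lemma cofinal (hprim : ∀ x y : G.V, ∃ z, G.le x z ∧ G.le y z) {J : Set G.V}
    (hJ : G.IsIdeal J) (hne : J.Nonempty) (x : G.V) : ∃ z ∈ J, G.le x z := by
  obtain ⟨y, hy⟩ := hne
  obtain ⟨z, hxz, hyz⟩ := hprim x y
  exact ⟨z, hJ y hy z hyz, hxz⟩

lemma inter_finiteness_ideal {φ : G.V → ℝ≥0∞} (hφ : G.Harmonic φ) {I : Set G.V}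
    (hI : G.IsIdeal I) : G.IsIdeal {x | x ∈ I ∧ φ x ≠ ⊤} := by
  rintro a ⟨haI, haF⟩ b hab
  exact ⟨hI a haI b hab, finiteness_ideal hφ a haF b hab⟩

lemma superharm_of_harmonic {φ : G.V → ℝ≥0∞} (hφ : G.Harmonic φ) (y : G.V) :
    G.P φ y ≤ φ y := (hφ y).ge

/-- The extension of data dominated by `φ` on an ideal is `≤ φ`. -/
lemma ExtF_le_of_data_le {φ v : G.V → ℝ≥0∞} (hφ : G.Harmonic φ) (hv : ∀ y, v y ≤ φ y)
    (x : G.V) : G.ExtF v x ≤ φ x :=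
  ExtF_le_superharm (superharm_of_harmonic hφ) hv x

/-- A harmonic function `φ` which takes an infinite value and equals the minimal
extension of finite data is semifinite; otherwise it is everywhere finite. -/
lemma finite_or_semifinite_ext {J : Set G.V} {v : G.V → ℝ≥0∞} (hv : IsData G J v)
    (hvfin : ∀ y, v y ≠ ⊤) : G.FiniteH (G.ExtF v) ∨ G.Semifinite (G.ExtF v) := by
  by_cases htop : ∃ x, G.ExtF v x = ⊤
  · exact Or.inr (semifinite_ext hv hvfin htop)
  · push_neg at htop
    exact Or.inl htop

/-- If `φ` is positive somewhere but equal to the extension of data supported on an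
empty-data situation, contradiction helper: extension of everywhere-zero data is zero. -/
lemma ExtF_eq_zero {v : G.V → ℝ≥0∞} (hv : ∀ y, v y = 0) (x : G.V) : G.ExtF v x = 0 := by
  refine le_antisymm ?_ (zero_le)
  refine ExtF_le_superharm (φ := fun _ => 0) (fun y => ?_) (fun y => (hv y).le) x
  rw [P, Finset.sum_const_zero]

end GradedGraph

namespace GradedGraph
variable {G : GradedGraph}

lemma indicator_le_fun {J : Set G.V} (φ : G.V → ℝ≥0∞) (y : G.V) :
    J.indicator φ y ≤ φ y := by
  by_cases hy : y ∈ J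
  · rw [Set.indicator_of_mem hy]
  · rw [Set.indicator_of_notMem hy]; exact zero_le

lemma indicator_ne_top {J : Set G.V} {φ : G.V → ℝ≥0∞} (h : ∀ y ∈ J, φ y ≠ ⊤) (y : G.V) :
    J.indicator φ y ≠ ⊤ := by
  by_cases hy : y ∈ J
  · rw [Set.indicator_of_mem hy]; exact h y hy
  · rw [Set.indicator_of_notMem hy]; exact ENNReal.zero_ne_top

/-- **Key self-extension property** : an indecomposable (finite or semifinite)
strictly positive harmonic function is the minimal extension of its restriction to
`I₀ = I ∩ (finiteness ideal)`, for any nonempty ideal `I`. -/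
lemma selfext {I : Set G.V} (hI : G.IsIdeal I) (hne : I.Nonempty)
    (hprim : ∀ x y : G.V, ∃ z, G.le x z ∧ G.le y z)
    {φ : G.V → ℝ≥0∞} (hφh : G.Harmonic φ) (hpos : ∀ x, 0 < φ x)
    (hind : (G.FiniteH φ ∧ G.IndecFinite φ) ∨ (G.Semifinite φ ∧ G.IndecSemifinite φ)) :
    ∀ x, φ x = G.ExtF ({y | y ∈ I ∧ φ y ≠ ⊤}.indicator φ) x := by
  set I₀ : Set G.V := {y | y ∈ I ∧ φ y ≠ ⊤} with hI₀def
  have hI₀ : G.IsIdeal I₀ := inter_finiteness_ideal hφh hI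
  have hdata : IsData G I₀ (I₀.indicator φ) := indicator_data hφh hI₀
  set η : G.V → ℝ≥0∞ := G.ExtF (I₀.indicator φ) with hηdef
  have hηh : G.Harmonic η := ExtF_harmonic hdata.subharm
  have hηle : ∀ y, η y ≤ φ y :=
    fun y => ExtF_le_of_data_le hφh (fun y => indicator_le_fun φ y) y
  have hfinind : ∀ y, I₀.indicator φ y ≠ ⊤ := indicator_ne_top (fun y hy => hy.2)
  -- find a point of I₀
  have hz : ∃ z, z ∈ I₀ := by
    rcases hind with ⟨hfin, -⟩ | ⟨hsemi, -⟩
    · obtain ⟨y, hy⟩ := hne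
      exact ⟨y, hy, hfin y⟩
    · have hz₀ : ∃ z₀, φ z₀ ≠ ⊤ := by
        by_contra hc
        push_neg at hc
        have hzero : ∀ y, ({y | φ y ≠ ⊤}.indicator φ) y = 0 := by
          intro y
          exact Set.indicator_of_notMem (by simp [hc y]) φ
        have h0 := semifinite_structure hφh hsemi (hne.some)
        rw [ExtF_eq_zero hzero] at h0
        exact (hpos hne.some).ne' h0
      obtain ⟨z₀, hz₀⟩ := hz₀
      obtain ⟨y, hy⟩ := hne
      obtain ⟨z, hz₀z, hyz⟩ := hprim z₀ y
      exact ⟨z, hI y hy z hyz, finiteness_ideal hφh z₀ hz₀ z hz₀z⟩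
  obtain ⟨z, hzmem⟩ := hz
  have hηz : η z = φ z := by
    rw [hηdef, ExtF_mem hdata hzmem]
    exact Set.indicator_of_mem hzmem φ
  rcases hind with ⟨hfin, hindf⟩ | ⟨hsemi, hinds⟩
  · obtain ⟨c, hc⟩ := hindf η hηh hηle ⟨z, by rw [hηz]; exact (hpos z).ne'⟩
    have hc1 : (c : ℝ≥0∞) = 1 :=
      coe_eq_one_of_mul (by rw [← hc z, hηz]) (hpos z).ne' (hfin z)
    intro x
    have := hc x
    rw [hc1, one_mul] at this
    exact this.symm
  · have hstruct := semifinite_structure hφh hsemi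
    have hfs : G.FiniteH η ∨ G.Semifinite η := finite_or_semifinite_ext hdata hfinind
    obtain ⟨c, hc⟩ := hinds η hηh hfs hηle ⟨z, hzmem.2, by rw [hηz]; exact (hpos z).ne'⟩
    have hc1 : (c : ℝ≥0∞) = 1 :=
      coe_eq_one_of_mul (by rw [← hc z hzmem.2, hηz]) (hpos z).ne' hzmem.2
    have hηφ : ∀ y, φ y ≠ ⊤ → η y = φ y := by
      intro y hy
      have := hc y hy
      rwa [hc1, one_mul] at this
    intro x
    refine le_antisymm ?_ (hηle x)
    calc φ x = G.ExtF ({y | φ y ≠ ⊤}.indicator φ) x := hstruct x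
      _ ≤ η x := by
          refine ExtF_le_of_data_le hηh (fun y => ?_) x
          by_cases hy : φ y ≠ ⊤
          · rw [Set.indicator_of_mem (show y ∈ {y | φ y ≠ ⊤} from hy)]
            exact (hηφ y hy).ge
          · rw [Set.indicator_of_notMem (show y ∉ {y | φ y ≠ ⊤} from hy)]
            exact zero_le

/-- Lift a (finite or semifinite) harmonic competitor from the restricted graph. -/
lemma lift_competitor {I : Set G.V} (hI : G.IsIdeal I) {φ : G.V → ℝ≥0∞}
    (hφh : G.Harmonic φ)
    {ψ' : (G.restrict I hI).V → ℝ≥0∞} (hψ'h : (G.restrict I hI).Harmonic ψ')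
    (hfs : (G.restrict I hI).FiniteH ψ' ∨ (G.restrict I hI).Semifinite ψ')
    (hle : ∀ x : (G.restrict I hI).V, ψ' x ≤ φ x.1) :
    ∃ φ' : G.V → ℝ≥0∞, G.Harmonic φ' ∧ (∀ y, φ' y ≤ φ y) ∧
      (G.FiniteH φ' ∨ G.Semifinite φ') ∧ (∀ x : (G.restrict I hI).V, φ' x.1 = ψ' x) := by
  rcases hfs with hfin' | hsemi'
  · -- finite competitor: extend it from all of `I`
    have hw : IsData (G.restrict I hI) Set.univ ψ' := by
      refine ⟨fun a _ b _ => Set.mem_univ b, fun x hx => absurd (Set.mem_univ x) hx,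
        fun x _ => hψ'h x⟩
    have hdata : IsData G (liftSet I Set.univ) (extend I ψ') := extend_data hw
    have hdfin : ∀ y, extend I ψ' y ≠ ⊤ := by
      intro y
      unfold extend
      split
      · exact hfin' _
      · exact ENNReal.zero_ne_top
    have hdle : ∀ y, extend I ψ' y ≤ φ y := by
      intro y
      unfold extend
      split
      · exact hle _
      · exact zero_le
    refine ⟨G.ExtF (extend I ψ'), ExtF_harmonic hdata.subharm,
      fun y => ExtF_le_of_data_le hφh hdle y,
      finite_or_semifinite_ext hdata hdfin, fun x => ?_⟩
    rw [ExtF_mem hdata ⟨x.2, Set.mem_univ _⟩]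
    exact extend_val ψ' x
  · -- semifinite competitor: extend the restriction to its finiteness ideal
    set F'' : Set (G.restrict I hI).V := {z | ψ' z ≠ ⊤} with hF''def
    have hstruct' := semifinite_structure hψ'h hsemi'
    have hw : IsData (G.restrict I hI) F'' (F''.indicator ψ') :=
      finite_indicator_data hψ'h
    have hdata : IsData G (liftSet I F'') (extend I (F''.indicator ψ')) := extend_data hw
    have hdfin : ∀ y, extend I (F''.indicator ψ') y ≠ ⊤ := by
      intro y
      unfold extend
      split
      · exact indicator_finiteness_ne_top _
      · exact ENNReal.zero_ne_top
    have hdle : ∀ y, extend I (F''.indicator ψ') y ≤ φ y := by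
      intro y
      unfold extend
      split
      · rename_i h
        exact le_trans (indicator_le_fun ψ' _) (hle _)
      · exact zero_le
    refine ⟨G.ExtF (extend I (F''.indicator ψ')), ExtF_harmonic hdata.subharm,
      fun y => ExtF_le_of_data_le hφh hdle y,
      finite_or_semifinite_ext hdata hdfin, fun x => ?_⟩
    rw [← extend_ExtF (F''.indicator ψ') x]
    exact (hstruct' x).symm

end GradedGraph

namespace GradedGraph
variable {G : GradedGraph}

lemma restrict_data {I : Set G.V} (hI : G.IsIdeal I) {J : Set G.V} {v : G.V → ℝ≥0∞}
    (hv : IsData G J v) (hJI : J ⊆ I) :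
    IsData (G.restrict I hI) {z : (G.restrict I hI).V | z.1 ∈ J} (fun z => v z.1) := by
  have hext : extend I (fun z : (G.restrict I hI).V => v z.1) = v := by
    funext y
    unfold extend
    split
    · rfl
    · rename_i h
      exact (hv.zero y fun hyJ => h (hJI hyJ)).symm
  constructor
  · intro a ha b hab
    exact hv.ideal a.1 ha b.1 (le_of_restrict hab)
  · intro z hz
    exact hv.zero z.1 hz
  · intro z hz
    rw [P_restrict, hext]
    exact hv.harm z.1 hz

end GradedGraph

namespace GradedGraph

theorem restriction_bijective_aux (G : GradedGraph)
    (hprim : ∀ x y : G.V, ∃ z, G.le x z ∧ G.le y z)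
    (I : Set G.V) (hI : G.IsIdeal I) (hne : I.Nonempty) :
    Set.BijOn
      (fun (φ : G.V → ℝ≥0∞) => (fun x : (G.restrict I hI).V => φ x.1))
      {φ : G.V → ℝ≥0∞ | G.Harmonic φ ∧ (∀ x, 0 < φ x) ∧
        ((G.FiniteH φ ∧ G.IndecFinite φ) ∨ (G.Semifinite φ ∧ G.IndecSemifinite φ))}
      {ψ : (G.restrict I hI).V → ℝ≥0∞ | (G.restrict I hI).Harmonic ψ ∧
        (∀ x, 0 < ψ x) ∧
        (((G.restrict I hI).FiniteH ψ ∧ (G.restrict I hI).IndecFinite ψ) ∨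
          ((G.restrict I hI).Semifinite ψ ∧ (G.restrict I hI).IndecSemifinite ψ))} := by
  refine ⟨?_, ?_, ?_⟩
  · -- MapsTo
    rintro φ ⟨hφh, hφpos, hφind⟩
    refine ⟨harmonic_restrict hφh, fun x => hφpos x.1, ?_⟩
    rcases hφind with ⟨hfin, hindf⟩ | ⟨hsemi, hinds⟩
    · refine Or.inl ⟨fun x => hfin x.1, ?_⟩
      intro ψ' hψ'h hψ'le hψ'ne
      obtain ⟨x₀, hx₀⟩ := hψ'ne
      obtain ⟨φ', hφ'h, hφ'le, -, hφ'val⟩ := lift_competitor hI hφh hψ'h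
        (Or.inl fun x => ne_top_of_le_ne_top (hfin x.1) (hψ'le x)) hψ'le
      obtain ⟨c, hc⟩ := hindf φ' hφ'h hφ'le ⟨x₀.1, by rw [hφ'val x₀]; exact hx₀⟩
      exact ⟨c, fun x => by rw [← hφ'val x, hc x.1]⟩
    · by_cases hIfin : ∀ z : (G.restrict I hI).V, φ z.1 ≠ ⊤
      · refine Or.inl ⟨hIfin, ?_⟩
        intro ψ' hψ'h hψ'le hψ'ne
        obtain ⟨x₀, hx₀⟩ := hψ'ne
        obtain ⟨φ', hφ'h, hφ'le, hφ'fs, hφ'val⟩ := lift_competitor hI hφh hψ'h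
          (Or.inl fun x => ne_top_of_le_ne_top (hIfin x) (hψ'le x)) hψ'le
        obtain ⟨c, hc⟩ := hinds φ' hφ'h hφ'fs hφ'le
          ⟨x₀.1, hIfin x₀, by rw [hφ'val x₀]; exact hx₀⟩
        exact ⟨c, fun x => by rw [← hφ'val x, hc x.1 (hIfin x)]⟩
      · push_neg at hIfin
        obtain ⟨zt, hzt⟩ := hIfin
        have hself := selfext hI hne hprim hφh hφpos (Or.inr ⟨hsemi, hinds⟩)
        set I₀ : Set G.V := {y | y ∈ I ∧ φ y ≠ ⊤} with hI₀def
        have hdataI₀ : IsData G I₀ (I₀.indicator φ) :=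
          indicator_data hφh (inter_finiteness_ideal hφh hI)
        have hdata' := restrict_data hI hdataI₀ (fun y hy => hy.1)
        have hfin' : ∀ z : (G.restrict I hI).V, (I₀.indicator φ) z.1 ≠ ⊤ :=
          fun z => indicator_ne_top (fun y hy => hy.2) z.1
        have hψeq : (fun x : (G.restrict I hI).V => φ x.1) =
            (G.restrict I hI).ExtF (fun z => (I₀.indicator φ) z.1) := by
          funext x
          rw [hself x.1, ← ExtF_restrict (I₀.indicator φ) x]
        refine Or.inr ⟨?_, ?_⟩
        · show (G.restrict I hI).Semifinite (fun x : (G.restrict I hI).V => φ x.1)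
          rw [hψeq]
          refine semifinite_ext hdata' hfin' ⟨zt, ?_⟩
          rw [← congrFun hψeq zt]
          exact hzt
        · intro ψ' hψ'h hψ'fs hψ'le hψ'ne
          obtain ⟨x₀, hx₀t, hx₀0⟩ := hψ'ne
          obtain ⟨φ', hφ'h, hφ'le, hφ'fs, hφ'val⟩ :=
            lift_competitor hI hφh hψ'h hψ'fs hψ'le
          obtain ⟨c, hc⟩ := hinds φ' hφ'h hφ'fs hφ'le
            ⟨x₀.1, hx₀t, by rw [hφ'val x₀]; exact hx₀0⟩
          exact ⟨c, fun x hx => by rw [← hφ'val x, hc x.1 hx]⟩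
  · -- InjOn
    rintro φ₁ ⟨h₁h, h₁pos, h₁ind⟩ φ₂ ⟨h₂h, h₂pos, h₂ind⟩ heq
    have hres : ∀ y, ∀ hy : y ∈ I, φ₁ y = φ₂ y := fun y hy =>
      congrFun heq (⟨y, hy⟩ : (G.restrict I hI).V)
    have hsets : {y | y ∈ I ∧ φ₁ y ≠ ⊤}.indicator φ₁
        = {y | y ∈ I ∧ φ₂ y ≠ ⊤}.indicator φ₂ := by
      funext y
      by_cases hyI : y ∈ I
      · have he := hres y hyI
        by_cases ht : φ₂ y = ⊤
        · rw [Set.indicator_of_notMem (fun h => h.2 (he.trans ht)),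
            Set.indicator_of_notMem (fun h => h.2 ht)]
        · rw [Set.indicator_of_mem (show y ∈ {y | y ∈ I ∧ φ₁ y ≠ ⊤} from
            ⟨hyI, fun h => ht (he.symm.trans h)⟩),
            Set.indicator_of_mem (show y ∈ {y | y ∈ I ∧ φ₂ y ≠ ⊤} from ⟨hyI, ht⟩)]
          exact he
      · rw [Set.indicator_of_notMem (fun h => hyI h.1),
          Set.indicator_of_notMem (fun h => hyI h.1)]
    have e1 := selfext hI hne hprim h₁h h₁pos h₁ind
    have e2 := selfext hI hne hprim h₂h h₂pos h₂ind
    funext x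
    rw [e1 x, e2 x, hsets]
  · -- SurjOn
    rintro ψ ⟨hψh, hψpos, hψind⟩
    rcases hψind with ⟨hfinψ, hindfψ⟩ | ⟨hsψ, hindsψ⟩
    · -- ψ finite
      have hw : IsData (G.restrict I hI) Set.univ ψ :=
        ⟨fun a _ b _ => Set.mem_univ b, fun x hx => absurd (Set.mem_univ x) hx,
          fun x _ => hψh x⟩
      have hdata : IsData G (liftSet I Set.univ) (extend I ψ) := extend_data hw
      set φ : G.V → ℝ≥0∞ := G.ExtF (extend I ψ) with hφdef
      have hφh : G.Harmonic φ := ExtF_harmonic hdata.subharm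
      have hval : ∀ x : (G.restrict I hI).V, φ x.1 = ψ x := by
        intro x
        rw [hφdef, ExtF_mem hdata ⟨x.2, Set.mem_univ _⟩]
        exact extend_val ψ x
      have hIdent : extend I ψ = I.indicator φ := by
        funext y
        unfold extend
        split
        · rename_i h
          rw [Set.indicator_of_mem h, hval ⟨y, h⟩]
        · rename_i h
          rw [Set.indicator_of_notMem h]
      have hvalself : ∀ y, φ y = G.ExtF (I.indicator φ) y := by
        intro y
        rw [show φ y = G.ExtF (extend I ψ) y from rfl, hIdent]
      have hφpos : ∀ x, 0 < φ x := by
        intro x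
        obtain ⟨z, hzI, hxz⟩ := cofinal hprim hI hne x
        refine lt_of_lt_of_le ?_ (ExtF_pos_of_le hxz)
        rw [show extend I ψ z = ψ ⟨z, hzI⟩ from dif_pos hzI]
        exact hψpos _
      have hwfin : ∀ y, extend I ψ y ≠ ⊤ := by
        intro y
        unfold extend
        split
        · exact hfinψ _
        · exact ENNReal.zero_ne_top
      -- common indecomposability argument
      have hkey : ∀ u : G.V → ℝ≥0∞, G.Harmonic u → (∀ y, u y ≤ φ y) →
          (∃ x₀, φ x₀ ≠ ⊤ ∧ u x₀ ≠ 0) →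
          ∃ c : ℝ≥0, ∀ x, φ x ≠ ⊤ → u x = (c : ℝ≥0∞) * φ x := by
        intro u huh hule hx₀
        obtain ⟨x₀, hx₀t, hx₀0⟩ := hx₀
        have hz₁ : ∃ z₁, ∃ hz₁ : z₁ ∈ I, u z₁ ≠ 0 := by
          by_contra hc
          push_neg at hc
          exact hx₀0 (agree_of_agree_on_ideal hφh hI hvalself huh zero_harmonic hule
            (fun y => zero_le) (fun y hy => hc y hy) hx₀t)
        obtain ⟨z₁, hz₁I, hz₁0⟩ := hz₁
        obtain ⟨c, hc⟩ := hindfψ (fun x => u x.1) (harmonic_restrict huh)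
          (fun x => le_of_le_of_eq (hule x.1) (hval x)) ⟨⟨z₁, hz₁I⟩, hz₁0⟩
        have hcle : (c : ℝ≥0∞) ≤ 1 := by
          refine coe_le_one_of_mul (a := ψ ⟨z₁, hz₁I⟩) ?_ (hψpos _).ne' (hfinψ _)
          rw [← hc ⟨z₁, hz₁I⟩]
          exact le_of_le_of_eq (hule z₁) (hval ⟨z₁, hz₁I⟩)
        refine ⟨c, fun x hx => ?_⟩
        refine agree_of_agree_on_ideal hφh hI hvalself huh (smul_harmonic hφh c) hule
          (fun y => smul_le_of_coe_le_one hcle y) (fun y hy => ?_) hx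
        have h2 := hc ⟨y, hy⟩
        rw [← hval ⟨y, hy⟩] at h2
        exact h2
      by_cases hT : ∃ x, φ x = ⊤
      · refine ⟨φ, ⟨hφh, hφpos, Or.inr ⟨semifinite_ext hdata hwfin hT, ?_⟩⟩, funext hval⟩
        intro u huh hufs hule hne'
        exact hkey u huh hule hne'
      · push_neg at hT
        refine ⟨φ, ⟨hφh, hφpos, Or.inl ⟨hT, ?_⟩⟩, funext hval⟩
        intro u huh hule hne'
        obtain ⟨x₀, hx₀0⟩ := hne'
        obtain ⟨c, hc⟩ := hkey u huh hule ⟨x₀, hT x₀, hx₀0⟩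
        exact ⟨c, fun x => hc x (hT x)⟩
    · -- ψ semifinite
      set F' : Set (G.restrict I hI).V := {z | ψ z ≠ ⊤} with hF'def
      have hstruct' := semifinite_structure hψh hsψ
      have hF'ideal : (G.restrict I hI).IsIdeal F' := finiteness_ideal hψh
      have hw : IsData (G.restrict I hI) F' (F'.indicator ψ) := finite_indicator_data hψh
      have hdata : IsData G (liftSet I F') (extend I (F'.indicator ψ)) := extend_data hw
      set φ : G.V → ℝ≥0∞ := G.ExtF (extend I (F'.indicator ψ)) with hφdef
      have hφh : G.Harmonic φ := ExtF_harmonic hdata.subharm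
      have hval : ∀ x : (G.restrict I hI).V, φ x.1 = ψ x := by
        intro x
        rw [hφdef, ← extend_ExtF (F'.indicator ψ) x]
        exact (hstruct' x).symm
      have hwfin : ∀ y, extend I (F'.indicator ψ) y ≠ ⊤ := by
        intro y
        unfold extend
        split
        · exact indicator_finiteness_ne_top _
        · exact ENNReal.zero_ne_top
      have hz' : ∃ z' : (G.restrict I hI).V, ψ z' ≠ ⊤ := by
        by_contra hc
        push_neg at hc
        have hzero : ∀ z, (F'.indicator ψ) z = 0 := by
          intro z
          exact Set.indicator_of_notMem (by simp [hF'def, hc z]) ψ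
        obtain ⟨y, hy⟩ := hne
        have h0 := hstruct' ⟨y, hy⟩
        replace h0 := h0.trans (ExtF_eq_zero hzero _)
        exact (hψpos ⟨y, hy⟩).ne' h0
      obtain ⟨z', hz'⟩ := hz'
      have hφpos : ∀ x, 0 < φ x := by
        intro x
        obtain ⟨z, hxz, hz'z⟩ := hprim x z'.1
        have hzI : z ∈ I := hI z'.1 z'.2 z hz'z
        have hzF' : (⟨z, hzI⟩ : (G.restrict I hI).V) ∈ F' :=
          hF'ideal z' hz' ⟨z, hzI⟩ (le_restrict z'.2 hz'z hzI)
        refine lt_of_lt_of_le ?_ (ExtF_pos_of_le hxz)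
        rw [show extend I (F'.indicator ψ) z = (F'.indicator ψ) ⟨z, hzI⟩ from dif_pos hzI]
        exact lt_of_lt_of_eq (hψpos _) (Set.indicator_of_mem hzF' ψ).symm
      have hIdent : extend I (F'.indicator ψ) = (liftSet I F').indicator φ := by
        funext y
        unfold extend
        split
        · rename_i h
          by_cases hyF : (⟨y, h⟩ : (G.restrict I hI).V) ∈ F'
          · exact ((Set.indicator_of_mem hyF ψ).trans (hval ⟨y, h⟩).symm).trans
              (Set.indicator_of_mem (show y ∈ liftSet I F' from ⟨h, hyF⟩) φ).symm
          · refine (Set.indicator_of_notMem hyF ψ).trans (Set.indicator_of_notMem ?_ φ).symm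
            rintro ⟨h', hF⟩
            exact hyF hF
        · rename_i h
          rw [Set.indicator_of_notMem ?_]
          rintro ⟨h', -⟩
          exact h h'
      have hvalself : ∀ y, φ y = G.ExtF ((liftSet I F').indicator φ) y := by
        intro y
        rw [show φ y = G.ExtF (extend I (F'.indicator ψ)) y from rfl, hIdent]
      have hJ₁ideal : G.IsIdeal (liftSet I F') := liftSet_ideal hF'ideal
      obtain ⟨zt, hzt⟩ := hsψ.1
      have htop : ∃ x, φ x = ⊤ := ⟨zt.1, by rw [hval zt]; exact hzt⟩
      refine ⟨φ, ⟨hφh, hφpos, Or.inr ⟨semifinite_ext hdata hwfin htop, ?_⟩⟩, funext hval⟩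
      intro u huh hufs hule hne'
      obtain ⟨x₀, hx₀t, hx₀0⟩ := hne'
      have hz₁ : ∃ z₁, ∃ hz₁ : z₁ ∈ liftSet I F', u z₁ ≠ 0 := by
        by_contra hc
        push_neg at hc
        exact hx₀0 (agree_of_agree_on_ideal hφh hJ₁ideal hvalself huh zero_harmonic hule
          (fun y => zero_le) (fun y hy => hc y hy) hx₀t)
      obtain ⟨z₁, hz₁J, hz₁0⟩ := hz₁
      -- build the competitor for ψ on the restricted graph
      have hu' : (G.restrict I hI).Harmonic (fun x => u x.1) := harmonic_restrict huh
      have hdata''' : IsData (G.restrict I hI) F' (F'.indicator (fun x => u x.1)) :=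
        indicator_data hu' hF'ideal
      have hfin''' : ∀ z, (F'.indicator (fun x : (G.restrict I hI).V => u x.1)) z ≠ ⊤ :=
        indicator_ne_top fun z hz =>
          ne_top_of_le_ne_top (show φ z.1 ≠ ⊤ by rw [hval z]; exact hz) (hule z.1)
      set ψ''' : (G.restrict I hI).V → ℝ≥0∞ :=
        (G.restrict I hI).ExtF (F'.indicator (fun x => u x.1)) with hψ'''def
      have hψ'''h : (G.restrict I hI).Harmonic ψ''' := ExtF_harmonic hdata'''.subharm
      have hψ'''le : ∀ z, ψ''' z ≤ ψ z := by
        intro z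
        rw [hstruct' z, hψ'''def]
        refine ExtF_mono (fun y => ?_) z
        by_cases hy : y ∈ F'
        · rw [Set.indicator_of_mem hy, Set.indicator_of_mem hy]
          exact le_of_le_of_eq (hule y.1) (hval y)
        · rw [Set.indicator_of_notMem hy, Set.indicator_of_notMem hy]
      have hψ'''fs := finite_or_semifinite_ext hdata''' hfin'''
      obtain ⟨hz₁I, hz₁F⟩ := hz₁J
      have hψ'''z₁ : ψ''' ⟨z₁, hz₁I⟩ = u z₁ := by
        rw [hψ'''def, ExtF_mem hdata''' hz₁F]; exact Set.indicator_of_mem hz₁F _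
      obtain ⟨c, hc⟩ := hindsψ ψ''' hψ'''h hψ'''fs hψ'''le
        ⟨⟨z₁, hz₁I⟩, hz₁F, by rw [hψ'''z₁]; exact hz₁0⟩
      have hcle : (c : ℝ≥0∞) ≤ 1 := by
        refine coe_le_one_of_mul (a := ψ ⟨z₁, hz₁I⟩) ?_ (hψpos _).ne' hz₁F
        rw [← hc ⟨z₁, hz₁I⟩ hz₁F]
        exact hψ'''le _
      refine ⟨c, fun x hx => ?_⟩
      refine agree_of_agree_on_ideal hφh hJ₁ideal hvalself huh (smul_harmonic hφh c) hule
        (fun y => smul_le_of_coe_le_one hcle y) (fun y hy => ?_) hx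
      obtain ⟨hyI, hyF⟩ := hy
      have h1 : ψ''' ⟨y, hyI⟩ = u y := by
        rw [hψ'''def, ExtF_mem hdata''' hyF]; exact Set.indicator_of_mem hyF _
      rw [← h1, hc ⟨y, hyI⟩ hyF, hval ⟨y, hyI⟩]

end GradedGraph

/-- Let `Γ` be a primitive graded graph and `I` a nonempty ideal of
`Γ`.  Restriction of functions is a bijection between the strictly positive
indecomposable (finite or semifinite) harmonic functions on `Γ` and those on `I`. -/
theorem restriction_bijective (G : GradedGraph)
    (hprim : ∀ x y : G.V, ∃ z, G.le x z ∧ G.le y z)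
    (I : Set G.V) (hI : G.IsIdeal I) (hne : I.Nonempty) :
    Set.BijOn
      (fun (φ : G.V → ℝ≥0∞) => (fun x : (G.restrict I hI).V => φ x.1))
      {φ : G.V → ℝ≥0∞ | G.Harmonic φ ∧ (∀ x, 0 < φ x) ∧
        ((G.FiniteH φ ∧ G.IndecFinite φ) ∨ (G.Semifinite φ ∧ G.IndecSemifinite φ))}
      {ψ : (G.restrict I hI).V → ℝ≥0∞ | (G.restrict I hI).Harmonic ψ ∧
        (∀ x, 0 < ψ x) ∧
        (((G.restrict I hI).FiniteH ψ ∧ (G.restrict I hI).IndecFinite ψ) ∨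
          ((G.restrict I hI).Semifinite ψ ∧ (G.restrict I hI).IndecSemifinite ψ))} := by
  exact GradedGraph.restriction_bijective_aux G hprim I hI hne

end Zigzag
end

section
/- Let Γ₁ and Γ₂ be graded graphs with a graded graph isomorphism λ ↦ λ′ from Γ₁ to Γ₂, and let Γ be the graded graph with Γ₀ = (Γ₁)₀ and Γ_n = (Γ₁)_n ⊔ (Γ₂)_{n−1} for n ≥ 1, whose edges are: the edges of Γ₁; the edges of Γ₂ (with levels shifted up by one); and, for every λ ∈ Γ₁, an edge from λ to λ′. If φ is a harmonic function on Γ and λ ∈ Γ₁ satisfies φ(λ′) > 0, then φ(λ) = +∞. -/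
/-!
Common definitions: graded graphs, ideals and coideals, harmonic functions and the
cone `K⁺`, finite / semifinite / indecomposable harmonic functions.
-/

open scoped ENNReal NNReal

namespace Zigzag

open GradedGraph

/-- The adjacency of the glued graph of Boyer's lemma. -/
def boyerAdj (G₁ G₂ : GradedGraph) (f : G₁.V → G₂.V) :
    (G₁.V ⊕ G₂.V) → (G₁.V ⊕ G₂.V) → Prop
  | .inl x, .inl y => G₁.adj x y
  | .inr x, .inr y => G₂.adj x y
  | .inl x, .inr y => y = f x
  | .inr _, .inl _ => False

/-- The glued graph of Boyer's lemma: `Γ₀ = (Γ₁)₀`, `Γ_n = (Γ₁)_n ⊔ (Γ₂)_{n−1}`, with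
the edges of `Γ₁`, the edges of `Γ₂` shifted up by one level, and an edge `λ ↗ λ′`
for every `λ ∈ Γ₁`, where `λ ↦ λ′` is a given isomorphism of graded graphs. -/
noncomputable def boyerGraph (G₁ G₂ : GradedGraph) (f : G₁.V ≃ G₂.V)
    (hf_rank : ∀ x, G₂.rank (f x) = G₁.rank x)
    (hf_adj : ∀ x y, G₁.adj x y ↔ G₂.adj (f x) (f y)) : GradedGraph where
  V := G₁.V ⊕ G₂.V
  rank := Sum.elim G₁.rank (fun y => G₂.rank y + 1)
  adj := boyerAdj G₁ G₂ f
  rank_adj := by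
    rintro (x | x) (y | y) h
    · exact G₁.rank_adj h
    · simp only [boyerAdj] at h
      subst h
      simp only [Sum.elim_inl, Sum.elim_inr, hf_rank]
    · simp only [boyerAdj] at h
    · have := G₂.rank_adj h
      simp only [Sum.elim_inr]
      omega
  finLevels n := by
    have : {a : G₁.V ⊕ G₂.V | Sum.elim G₁.rank (fun y => G₂.rank y + 1) a = n}
        ⊆ (Sum.inl '' {x | G₁.rank x = n}) ∪ (Sum.inr '' {y | G₂.rank y = n - 1}) := by
      rintro (x | y) h
      · exact Or.inl ⟨x, h, rfl⟩
      · refine Or.inr ⟨y, ?_, rfl⟩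
        have h' : G₂.rank y + 1 = n := h
        show G₂.rank y = n - 1
        omega
    exact Set.Finite.subset
      (((G₁.finLevels n).image Sum.inl).union ((G₂.finLevels (n - 1)).image Sum.inr)) this
  outEdge := by
    rintro (x | y)
    · exact ⟨Sum.inr (f x), rfl⟩
    · obtain ⟨z, hz⟩ := G₂.outEdge y
      exact ⟨Sum.inr z, hz⟩

/-- Boyer's lemma.  If `φ` is a harmonic function on the glued
graph and `λ ∈ Γ₁` satisfies `φ(λ′) > 0`, then `φ(λ) = +∞`. -/
theorem boyer_lemma (G₁ G₂ : GradedGraph) (f : G₁.V ≃ G₂.V)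
    (hf_rank : ∀ x, G₂.rank (f x) = G₁.rank x)
    (hf_adj : ∀ x y, G₁.adj x y ↔ G₂.adj (f x) (f y))
    (φ : (G₁.V ⊕ G₂.V) → ℝ≥0∞)
    (hφ : (boyerGraph G₁ G₂ f hf_rank hf_adj).Harmonic φ)
    (lam : G₁.V) (hpos : φ (Sum.inr (f lam)) ≠ 0) :
    φ (Sum.inl lam) = ⊤ := by
  haveI : DecidableEq (G₁.V ⊕ G₂.V) := Classical.decEq _
  haveI : DecidableEq G₂.V := Classical.decEq _
  set G := boyerGraph G₁ G₂ f hf_rank hf_adj with hG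
  have mem_up : ∀ (H : GradedGraph) (x y : H.V), y ∈ H.upFinset x ↔ H.adj x y :=
    fun H x y => Set.Finite.mem_toFinset _
  have memG : ∀ a b : G₁.V ⊕ G₂.V, a ∈ G.upFinset b ↔ boyerAdj G₁ G₂ f b a :=
    fun a b => mem_up G b a
  -- description of upper neighbours of `inl x` in the glued graph
  have hsum1 : ∀ x : G₁.V, φ (Sum.inl x) =
      (∑ μ ∈ G₁.upFinset x, φ (Sum.inl μ)) + φ (Sum.inr (f x)) := by
    intro x
    have hset : G.upFinset (Sum.inl x) =
        (G₁.upFinset x).image Sum.inl ∪ {Sum.inr (f x)} := by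
      show (G.upFinset (Sum.inl x) : Finset (G₁.V ⊕ G₂.V)) =
        ((G₁.upFinset x).image Sum.inl ∪ {Sum.inr (f x)} : Finset (G₁.V ⊕ G₂.V))
      refine Finset.ext (α := G₁.V ⊕ G₂.V) fun y => ?_
      rcases y with y | y
      · refine (memG _ _).trans ?_
        simp only [mem_up, Finset.mem_union, Finset.mem_image, Finset.mem_singleton]
        constructor
        · intro h
          exact Or.inl ⟨y, h, rfl⟩
        · rintro (⟨z, hz, hzy⟩ | h)
          · cases hzy
            exact hz
          · exact absurd h (by simp)
      · refine (memG _ _).trans ?_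
        simp only [mem_up, Finset.mem_union, Finset.mem_image, Finset.mem_singleton]
        constructor
        · intro h
          have hy : y = f x := h
          exact Or.inr (by rw [hy])
        · rintro (⟨z, hz, hzy⟩ | h)
          · exact absurd hzy (by simp)
          · have hy : y = f x := Sum.inr.inj h
            show y = f x
            exact hy
    have hdisj : Disjoint ((G₁.upFinset x).image Sum.inl)
        ({Sum.inr (f x)} : Finset (G₁.V ⊕ G₂.V)) := by
      simp only [Finset.disjoint_singleton_right, Finset.mem_image]
      rintro ⟨z, _, h⟩
      exact Sum.inl_ne_inr h
    have key : (∑ y ∈ ((G₁.upFinset x).image Sum.inl ∪ {Sum.inr (f x)} :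
          Finset (G₁.V ⊕ G₂.V)), φ y) =
        (∑ μ ∈ G₁.upFinset x, φ (Sum.inl μ)) + φ (Sum.inr (f x)) := by
      rw [Finset.sum_union hdisj,
        Finset.sum_image (fun a _ b _ h => Sum.inl.inj h), Finset.sum_singleton]
    rw [hφ (Sum.inl x), hset]
    exact key
  -- upper neighbours of `inr y`
  have hsum2 : ∀ y : G₂.V, φ (Sum.inr y) = ∑ z ∈ G₂.upFinset y, φ (Sum.inr z) := by
    intro y
    have hset : G.upFinset (Sum.inr y) = (G₂.upFinset y).image Sum.inr := by
      show (G.upFinset (Sum.inr y) : Finset (G₁.V ⊕ G₂.V)) =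
        ((G₂.upFinset y).image Sum.inr : Finset (G₁.V ⊕ G₂.V))
      refine Finset.ext (α := G₁.V ⊕ G₂.V) fun z => ?_
      rcases z with z | z
      · refine (memG _ _).trans ?_
        simp only [mem_up, Finset.mem_image]
        constructor
        · intro h
          exact absurd h (fun hh => hh)
        · rintro ⟨w, _, h⟩
          exact Sum.inr_ne_inl h
      · refine (memG _ _).trans ?_
        simp only [mem_up, Finset.mem_image]
        constructor
        · intro h
          exact ⟨z, h, rfl⟩
        · rintro ⟨w, hw, h⟩
          cases h
          exact hw
    have key : (∑ z ∈ ((G₂.upFinset y).image Sum.inr : Finset (G₁.V ⊕ G₂.V)), φ z) =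
        ∑ z ∈ G₂.upFinset y, φ (Sum.inr z) := by
      rw [Finset.sum_image (fun a _ b _ h => Sum.inr.inj h)]
    rw [hφ (Sum.inr y), hset]
    exact key
  -- transport of upper neighbourhood along `f`
  have hbij : ∀ x : G₁.V, G₂.upFinset (f x) = (G₁.upFinset x).image f := by
    intro x
    ext z
    simp only [mem_up, Finset.mem_image]
    constructor
    · intro h
      refine ⟨f.symm z, ?_, f.apply_symm_apply z⟩
      rw [hf_adj, f.apply_symm_apply]
      exact h
    · rintro ⟨w, hw, rfl⟩
      exact (hf_adj x w).1 hw
  have h2 : ∀ x : G₁.V,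
      φ (Sum.inr (f x)) = ∑ μ ∈ G₁.upFinset x, φ (Sum.inr (f μ)) := by
    intro x
    rw [hsum2 (f x), hbij x, Finset.sum_image (fun a _ b _ h => f.injective h)]
  -- key induction
  have hind : ∀ n : ℕ, ∀ x : G₁.V,
      (n + 1 : ℝ≥0∞) * φ (Sum.inr (f x)) ≤ φ (Sum.inl x) := by
    intro n
    induction n with
    | zero =>
        intro x
        rw [hsum1 x]
        simpa using le_add_self
    | succ n ih =>
        intro x
        rw [hsum1 x]
        have h1 : (n + 1 : ℝ≥0∞) * φ (Sum.inr (f x)) ≤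
            ∑ μ ∈ G₁.upFinset x, φ (Sum.inl μ) := by
          calc (n + 1 : ℝ≥0∞) * φ (Sum.inr (f x))
              = ∑ μ ∈ G₁.upFinset x, (n + 1 : ℝ≥0∞) * φ (Sum.inr (f μ)) := by
                rw [← Finset.mul_sum, ← h2 x]
            _ ≤ ∑ μ ∈ G₁.upFinset x, φ (Sum.inl μ) :=
                Finset.sum_le_sum fun μ _ => ih μ
        have hcast : ((n + 1 : ℕ) + 1 : ℝ≥0∞) * φ (Sum.inr (f x))
            = (n + 1 : ℝ≥0∞) * φ (Sum.inr (f x)) + φ (Sum.inr (f x)) := by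
          push_cast
          ring
        rw [hcast]
        exact add_le_add_left h1 _
  by_contra htop
  have hct : φ (Sum.inr (f lam)) ≠ ⊤ := by
    intro h
    apply htop
    have h0 := hind 0 lam
    rw [h] at h0
    simp only [Nat.cast_zero, zero_add, one_mul] at h0
    exact top_le_iff.1 h0
  obtain ⟨n, hn⟩ := ENNReal.exists_nat_gt
    (ENNReal.div_lt_top htop hpos).ne
  have hlt : φ (Sum.inl lam) < (n : ℝ≥0∞) * φ (Sum.inr (f lam)) := by
    rw [ENNReal.div_lt_iff (Or.inl hpos) (Or.inl hct)] at hn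
    exact hn
  have hle : (n : ℝ≥0∞) * φ (Sum.inr (f lam)) ≤ φ (Sum.inl lam) := by
    refine le_trans ?_ (hind n lam)
    gcongr
    exact le_self_add
  exact absurd hle (not_le.2 hlt)

end Zigzag
end

section
/- Let n, m ≥ 2 be integers and let n₁, m₁ ≥ 0 with N = n₁ + m₁ ≥ 1. The number of saturated chains in the subword order on binary words from the word +ⁿ−ᵐ to the word +^{n₁+n−1}−+−^{m₁+m−1} (i.e. sequences +ⁿ−ᵐ = b₀ ↗ b₁ ↗ ⋯ ↗ b_N = +^{n₁+n−1}−+−^{m₁+m−1}) equals N · N! / (n₁! · m₁!). -/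
namespace Zigzag

/-- Binary words: `true` is `+`, `false` is `−`. -/
abbrev BW := List Bool

/-- `CoveredBy a b`: `b` covers `a` in the subword order, i.e. `|b| = |a| + 1` and `a`
is a subword of `b`. -/
def CoveredBy (a b : BW) : Prop := a.Sublist b ∧ b.length = a.length + 1

open List

/-- words of type `+^p -^q` -/
def Aw (p q : ℕ) : BW := List.replicate p true ++ List.replicate q false

/-- words of type `+^r - + -^s` -/
def Bw (r s : ℕ) : BW := List.replicate r true ++ [false, true] ++ List.replicate s false

lemma Aw_length (p q : ℕ) : (Aw p q).length = p + q := by simp [Aw]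
lemma Bw_length (r s : ℕ) : (Bw r s).length = r + s + 2 := by simp [Bw]; omega

lemma count_true_Aw (p q : ℕ) : (Aw p q).count true = p := by
  simp [Aw, List.count_replicate]
lemma count_false_Aw (p q : ℕ) : (Aw p q).count false = q := by
  simp [Aw, List.count_replicate]
lemma count_true_Bw (r s : ℕ) : (Bw r s).count true = r + 1 := by
  simp [Bw, List.count_replicate]
lemma count_false_Bw (r s : ℕ) : (Bw r s).count false = s + 1 := by
  simp [Bw, List.count_replicate]

lemma Aw_inj {p q p' q' : ℕ} (h : Aw p q = Aw p' q') : p = p' ∧ q = q' := by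
  constructor
  · have := congrArg (fun l => l.count true) h; simpa [count_true_Aw] using this
  · have := congrArg (fun l => l.count false) h; simpa [count_false_Aw] using this

lemma Bw_inj {p q p' q' : ℕ} (h : Bw p q = Bw p' q') : p = p' ∧ q = q' := by
  constructor
  · have := congrArg (fun l => l.count true) h; simpa [count_true_Bw] using this
  · have := congrArg (fun l => l.count false) h; simpa [count_false_Bw] using this

lemma getElem_Bw (r s : ℕ) : (Bw r s)[r]? = some false := by
  rw [Bw, List.getElem?_append_left (by simp),
    List.getElem?_append_right (by simp)]
  simp

lemma getElem_Aw {r p : ℕ} (q : ℕ) (h : r < p) : (Aw p q)[r]? = some true := by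
  rw [Aw, List.getElem?_append_left (by simpa)]
  simp [List.getElem?_replicate, h]

lemma Bw_ne_Aw (a b c d : ℕ) : Bw a b ≠ Aw c d := by
  intro h
  have hc : a + 1 = c := by
    have := congrArg (fun l => l.count true) h
    simpa [count_true_Bw, count_true_Aw] using this
  have hg := congrArg (fun l => l[a]?) h
  simp only [getElem_Bw, getElem_Aw d (show a < c by omega)] at hg
  simp at hg

def coverSet (w : BW) : Finset BW :=
  w.sublists.toFinset.filter (fun v => w.length = v.length + 1)

lemma mem_coverSet {v w : BW} : v ∈ coverSet w ↔ CoveredBy v w := by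
  simp [coverSet, CoveredBy, List.mem_sublists]

lemma sublist_pair {x y : Bool} {l : List Bool} (h : l <+ [x, y]) :
    l = [] ∨ l = [x] ∨ l = [y] ∨ l = [x, y] := by
  rcases h with _ | ⟨_, h⟩ | ⟨_, h⟩ <;>
    rcases h with _ | ⟨_, h⟩ | ⟨_, h⟩ <;> simp_all

lemma coverSet_Aw {p q : ℕ} (hp : 1 ≤ p) (hq : 1 ≤ q) :
    coverSet (Aw p q) = {Aw (p-1) q, Aw p (q-1)} := by
  ext v
  rw [mem_coverSet, Finset.mem_insert, Finset.mem_singleton]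
  constructor
  · rintro ⟨hs, hl⟩
    rw [Aw, List.sublist_append_iff] at hs
    obtain ⟨l₁, l₂, rfl, h₁, h₂⟩ := hs
    rw [List.sublist_replicate_iff] at h₁ h₂
    obtain ⟨p', hp', rfl⟩ := h₁
    obtain ⟨q', hq', rfl⟩ := h₂
    simp only [Aw, List.length_append, List.length_replicate] at hl
    have : (p' = p - 1 ∧ q' = q) ∨ (p' = p ∧ q' = q - 1) := by omega
    rcases this with ⟨rfl, rfl⟩ | ⟨rfl, rfl⟩
    · left; rfl
    · right; rfl
  · rintro (rfl | rfl) <;> constructor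
    · exact List.Sublist.append
        ((List.replicate_sublist_replicate true).2 (by omega)) (List.Sublist.refl _)
    · simp [Aw]; omega
    · exact List.Sublist.append (List.Sublist.refl _)
        ((List.replicate_sublist_replicate false).2 (by omega))
    · simp [Aw]; omega

lemma coverSet_Bw {r s : ℕ} (hr : 1 ≤ r) (hs : 1 ≤ s) :
    coverSet (Bw r s) = {Bw (r-1) s, Bw r (s-1), Aw (r+1) s, Aw r (s+1)} := by
  ext v
  rw [mem_coverSet]
  simp only [Finset.mem_insert, Finset.mem_singleton]
  constructor
  · rintro ⟨hsub, hl⟩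
    rw [Bw, List.append_assoc, List.sublist_append_iff] at hsub
    obtain ⟨l₁, l₂, rfl, h₁, h₂⟩ := hsub
    rw [List.sublist_replicate_iff] at h₁
    obtain ⟨r', hr', rfl⟩ := h₁
    rw [List.sublist_append_iff] at h₂
    obtain ⟨mid, l₃, rfl, hmid, h₃⟩ := h₂
    rw [List.sublist_replicate_iff] at h₃
    obtain ⟨s', hs', rfl⟩ := h₃
    simp only [Bw, List.length_append, List.length_replicate, List.length_cons,
      List.length_nil] at hl
    rcases sublist_pair hmid with rfl | rfl | rfl | rfl
    · simp at hl; omega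
    · -- mid = [false] : v = Aw r (s+1), with r' = r, s' = s
      simp only [List.length_cons, List.length_nil] at hl
      obtain ⟨rfl, rfl⟩ : r' = r ∧ s' = s := by omega
      right; right; right
      simp [Aw, List.replicate_succ]
    · -- mid = [true] : v = Aw (r+1) s
      simp only [List.length_cons, List.length_nil] at hl
      obtain ⟨rfl, rfl⟩ : r' = r ∧ s' = s := by omega
      right; right; left
      simp [Aw, List.replicate_succ']
    · -- mid = [false, true] : v = Bw r' s'
      simp only [List.length_cons, List.length_nil] at hl
      have : (r' = r - 1 ∧ s' = s) ∨ (r' = r ∧ s' = s - 1) := by omega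
      rcases this with ⟨rfl, rfl⟩ | ⟨rfl, rfl⟩
      · left; simp [Bw, List.append_assoc]
      · right; left; simp [Bw, List.append_assoc]
  · have hrep : ∀ k j : ℕ, k ≤ j → List.replicate k true <+ List.replicate j true :=
      fun k j h => (List.replicate_sublist_replicate true).2 h
    have hrepf : ∀ k j : ℕ, k ≤ j → List.replicate k false <+ List.replicate j false :=
      fun k j h => (List.replicate_sublist_replicate false).2 h
    rintro (rfl | rfl | rfl | rfl) <;> refine ⟨?_, ?_⟩
    · exact List.Sublist.append (List.Sublist.append (hrep _ _ (by omega)) (List.Sublist.refl _)) (List.Sublist.refl _)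
    · simp [Bw]; omega
    · exact List.Sublist.append (List.Sublist.refl _) (hrepf _ _ (by omega))
    · simp [Bw]; omega
    · -- Aw (r+1) s <+ Bw r s
      rw [Aw, Bw]
      refine List.Sublist.append ?_ (List.Sublist.refl _)
      rw [List.replicate_succ']
      exact List.Sublist.append (List.Sublist.refl _) (by decide)
    · simp [Aw, Bw]; omega
    · -- Aw r (s+1) <+ Bw r s
      rw [Aw, Bw, List.append_assoc, List.replicate_succ]
      refine List.Sublist.append (List.Sublist.refl _) ?_
      refine List.Sublist.cons₂ false ?_
      exact (List.sublist_cons_self true _)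
    · simp [Aw, Bw]; omega

def nchains : ℕ → BW → BW → ℕ
  | 0, u, w => if u = w then 1 else 0
  | N+1, u, w => ∑ v ∈ coverSet w, nchains N u v

lemma nchains_eq_zero {u : BW} : ∀ {N : ℕ} {w : BW}, ¬ u.Sublist w → nchains N u w = 0
  | 0, w, h => by
    rw [nchains, if_neg]
    rintro rfl
    exact h (List.Sublist.refl u)
  | N+1, w, h => by
    rw [nchains]
    refine Finset.sum_eq_zero fun v hv => ?_
    have hc := mem_coverSet.1 hv
    exact nchains_eq_zero (fun hsub => h (hsub.trans hc.1))

lemma not_sublist_Aw_true {n m p q : ℕ} (h : p < n) : ¬ (Aw n m).Sublist (Aw p q) := by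
  intro hs
  have := hs.count_le true
  rw [count_true_Aw, count_true_Aw] at this
  omega

lemma not_sublist_Aw_false {n m p q : ℕ} (h : q < m) : ¬ (Aw n m).Sublist (Aw p q) := by
  intro hs
  have := hs.count_le false
  rw [count_false_Aw, count_false_Aw] at this
  omega

lemma not_sublist_Bw_true {n m r s : ℕ} (h : r + 1 < n) : ¬ (Aw n m).Sublist (Bw r s) := by
  intro hs
  have := hs.count_le true
  rw [count_true_Aw, count_true_Bw] at this
  omega

lemma not_sublist_Bw_false {n m r s : ℕ} (h : s + 1 < m) : ¬ (Aw n m).Sublist (Bw r s) := by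
  intro hs
  have := hs.count_le false
  rw [count_false_Aw, count_false_Bw] at this
  omega

lemma Aw_ne_Bw_corner {n m : ℕ} (hn : 1 ≤ n) : Aw n m ≠ Bw (n-1) (m-1) := by
  intro h
  have hg := congrArg (fun l => l[n-1]?) h
  simp only [getElem_Bw, getElem_Aw m (show n - 1 < n by omega)] at hg
  simp at hg

lemma chainsA {n m : ℕ} (hn : 1 ≤ n) (hm : 1 ≤ m) :
    ∀ (K i j : ℕ), i + j = K → nchains K (Aw n m) (Aw (n+i) (m+j)) = Nat.choose K i := by
  intro K
  induction K with
  | zero =>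
    intro i j hij
    obtain ⟨rfl, rfl⟩ : i = 0 ∧ j = 0 := by omega
    simp [nchains]
  | succ K ih =>
    intro i j hij
    rw [nchains, coverSet_Aw (by omega) (by omega),
      Finset.sum_pair (fun h => by have := Aw_inj h; omega)]
    rcases i with _ | i
    · -- i = 0
      rw [nchains_eq_zero (not_sublist_Aw_true (by omega))]
      have hj : m + j - 1 = m + (j - 1) := by omega
      rw [hj, ih 0 (j-1) (by omega)]
      simp
    · have h1 : n + (i+1) - 1 = n + i := by omega
      rw [h1, ih i j (by omega)]
      rcases j with _ | j
      · rw [nchains_eq_zero (not_sublist_Aw_false (by omega))]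
        have : i = K := by omega
        subst this
        simp [Nat.choose_self]
      · have h2 : m + (j+1) - 1 = m + j := by omega
        rw [h2, ih (i+1) j (by omega)]
        rw [Nat.choose_succ_succ]

lemma sum_four {f : BW → ℕ} {w1 w2 w3 w4 : BW} (h12 : w1 ≠ w2) (h13 : w1 ≠ w3)
    (h14 : w1 ≠ w4) (h23 : w2 ≠ w3) (h24 : w2 ≠ w4) (h34 : w3 ≠ w4) :
    ∑ v ∈ ({w1, w2, w3, w4} : Finset BW), f v = f w1 + f w2 + f w3 + f w4 := by
  have m1 : w1 ∉ ({w2, w3, w4} : Finset BW) := by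
    simp only [Finset.mem_insert, Finset.mem_singleton]
    push_neg
    exact ⟨h12, h13, h14⟩
  have m2 : w2 ∉ ({w3, w4} : Finset BW) := by
    simp only [Finset.mem_insert, Finset.mem_singleton]
    push_neg
    exact ⟨h23, h24⟩
  have m3 : w3 ∉ ({w4} : Finset BW) := by simpa using h34
  rw [Finset.sum_insert m1, Finset.sum_insert m2, Finset.sum_insert m3,
    Finset.sum_singleton]
  omega

lemma chainsB {n m : ℕ} (hn : 2 ≤ n) (hm : 2 ≤ m) :
    ∀ (K i j : ℕ), i + j = K →
      nchains K (Aw n m) (Bw (n-1+i) (m-1+j)) = K * Nat.choose K i := by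
  intro K
  induction K with
  | zero =>
    intro i j hij
    obtain ⟨rfl, rfl⟩ : i = 0 ∧ j = 0 := by omega
    rw [nchains, if_neg (by simpa using Aw_ne_Bw_corner (by omega))]
    simp
  | succ K ih =>
    intro i j hij
    rw [nchains, coverSet_Bw (by omega) (by omega),
      sum_four (fun h => by have := Bw_inj h; omega)
        (Bw_ne_Aw _ _ _ _) (Bw_ne_Aw _ _ _ _) (Bw_ne_Aw _ _ _ _) (Bw_ne_Aw _ _ _ _)
        (fun h => by have := Aw_inj h; omega)]
    -- T1 : Bw (n-1+i-1) (m-1+j), T2 : Bw (n-1+i) (m-1+j-1),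
    -- T3 : Aw (n-1+i+1) (m-1+j), T4 : Aw (n-1+i) (m-1+j+1)
    have hT3e : n - 1 + i + 1 = n + i := by omega
    rcases i with _ | i
    · -- i = 0 : T1 = 0, T4 = 0, j = K+1 ≥ 1
      rw [nchains_eq_zero (not_sublist_Bw_true (by omega)),
          nchains_eq_zero (not_sublist_Aw_true (show n - 1 + 0 < n by omega))]
      have hj1 : m - 1 + j - 1 = m - 1 + (j - 1) := by omega
      rw [hj1, ih 0 (j-1) (by omega)]
      have hj2 : m - 1 + j = m + (j - 1) := by omega
      rw [hT3e, hj2, chainsA (by omega) (by omega) K 0 (j-1) (by omega)]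
      simp
    · have h1 : n - 1 + (i+1) - 1 = n - 1 + i := by omega
      rw [h1, ih i j (by omega)]
      rcases j with _ | j
      · -- j = 0 : T2 = 0, T3 = 0, i+1 = K+1
        rw [nchains_eq_zero (not_sublist_Bw_false (show m - 1 + 0 - 1 + 1 < m by omega)),
            nchains_eq_zero (not_sublist_Aw_false (show m - 1 + 0 < m by omega))]
        have h4 : m - 1 + 0 + 1 = m + 0 := by omega
        have h5 : n - 1 + (i + 1) = n + i := by omega
        rw [h4, h5, chainsA (by omega) (by omega) K i 0 (by omega)]
        obtain rfl : i = K := by omega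
        simp [Nat.choose_self]
      · -- i, j ≥ 1
        have h2 : m - 1 + (j+1) - 1 = m - 1 + j := by omega
        rw [h2, ih (i+1) j (by omega)]
        have h3 : m - 1 + (j + 1) = m + j := by omega
        rw [hT3e, h3, chainsA (by omega) (by omega) K (i+1) j (by omega)]
        have h4 : n - 1 + (i+1) = n + i := by omega
        have h5 : m + j + 1 = m + (j+1) := by omega
        rw [h4, h5, chainsA (by omega) (by omega) K i (j+1) (by omega)]
        rw [show (K+1).choose (i+1) = K.choose i + K.choose (i+1) from
          Nat.choose_succ_succ K i]
        ring

abbrev Chains (u w : BW) (N : ℕ) : Type :=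
  {c : Fin (N + 1) → BW //
    c 0 = u ∧ c (Fin.last N) = w ∧ ∀ i : Fin N, CoveredBy (c i.castSucc) (c i.succ)}

lemma chain_sublist {u w : BW} {N : ℕ} (c : Chains u w N) (i : Fin (N+1)) :
    (c.1 i).Sublist w := by
  obtain ⟨c, h0, hl, hc⟩ := c
  suffices H : ∀ (d : ℕ) (i : Fin (N+1)), i.val + d = N → (c i).Sublist w by
    exact H (N - i.val) i (by omega)
  intro d
  induction d with
  | zero =>
    intro i hi
    have : i = Fin.last N := by ext; simpa using hi
    rw [this, hl]
  | succ d ihd =>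
    intro i hi
    have hiN : i.val < N := by omega
    have hcov := hc ⟨i.val, hiN⟩
    have e1 : (⟨i.val, hiN⟩ : Fin N).castSucc = i := by ext; simp
    rw [e1] at hcov
    exact hcov.1.trans (ihd (⟨i.val, hiN⟩ : Fin N).succ (by simp; omega))

instance chains_finite (u w : BW) (N : ℕ) : Finite (Chains u w N) := by
  classical
  have : Function.Injective
      (fun (c : Chains u w N) (i : Fin (N+1)) =>
        (⟨c.1 i, by simp [List.mem_sublists]; exact chain_sublist c i⟩ :
          {l : BW // l ∈ w.sublists.toFinset})) := by
    intro c c' h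
    apply Subtype.ext
    funext i
    exact congrArg Subtype.val (congrFun h i)
  exact Finite.of_injective _ this

lemma natCard_sigma {ι : Type} [Fintype ι] (f : ι → Type) [∀ i, Finite (f i)] :
    Nat.card (Σ i, f i) = ∑ i, Nat.card (f i) := by
  letI : ∀ i, Fintype (f i) := fun i => Fintype.ofFinite _
  simp [Nat.card_eq_fintype_card]

def stepTo (u w : BW) (N : ℕ) (c : Chains u w (N+1)) :
    Σ v : {v // v ∈ coverSet w}, Chains u v N := by
  refine ⟨⟨c.1 (Fin.castSucc (Fin.last N)), ?_⟩, ⟨fun i => c.1 i.castSucc, ?_, rfl, ?_⟩⟩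
  · rw [mem_coverSet]
    have h := c.2.2.2 (Fin.last N)
    rwa [Fin.succ_last, c.2.2.1] at h
  · show c.1 ((0 : Fin (N+1)).castSucc) = u
    have e : ((0 : Fin (N+1))).castSucc = (0 : Fin (N+2)) := Fin.ext (by simp)
    rw [e]
    exact c.2.1
  · intro i
    have h := c.2.2.2 i.castSucc
    rwa [Fin.succ_castSucc] at h

def stepFrom (u w : BW) (N : ℕ) (vc : Σ v : {v // v ∈ coverSet w}, Chains u v N) :
    Chains u w (N+1) := by
  refine ⟨Fin.snoc vc.2.1 w, ?_, ?_, ?_⟩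
  · have e : (0 : Fin (N+2)) = Fin.castSucc 0 := rfl
    rw [e, Fin.snoc_castSucc]
    exact vc.2.2.1
  · simp
  · intro i
    refine Fin.lastCases ?_ ?_ i
    · rw [Fin.succ_last]
      have e1 : (Fin.snoc vc.2.1 w : Fin (N+2) → BW) (Fin.castSucc (Fin.last N))
          = vc.2.1 (Fin.last N) := Fin.snoc_castSucc ..
      rw [e1, Fin.snoc_last, vc.2.2.2.1]
      exact mem_coverSet.1 vc.1.2
    · intro j
      rw [Fin.succ_castSucc]
      have e1 : (Fin.snoc vc.2.1 w : Fin (N+2) → BW) (Fin.castSucc (Fin.castSucc j))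
          = vc.2.1 (Fin.castSucc j) := Fin.snoc_castSucc ..
      have e2 : (Fin.snoc vc.2.1 w : Fin (N+2) → BW) (Fin.castSucc (Fin.succ j))
          = vc.2.1 (Fin.succ j) := Fin.snoc_castSucc ..
      rw [e1, e2]
      exact vc.2.2.2.2 j

def stepEquiv (u w : BW) (N : ℕ) :
    Chains u w (N+1) ≃ Σ v : {v // v ∈ coverSet w}, Chains u v N where
  toFun := stepTo u w N
  invFun := stepFrom u w N
  left_inv c := by
    apply Subtype.ext
    funext i
    refine Fin.lastCases ?_ ?_ i
    · show (Fin.snoc _ w : Fin (N+2) → BW) (Fin.last (N+1)) = c.1 (Fin.last (N+1))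
      rw [Fin.snoc_last, c.2.2.1]
    · intro j
      show (Fin.snoc _ w : Fin (N+2) → BW) (Fin.castSucc j) = c.1 (Fin.castSucc j)
      rw [Fin.snoc_castSucc]
      rfl
  right_inv vc := by
    obtain ⟨⟨v, hv⟩, c, hc⟩ := vc
    have hvv : (Fin.snoc c w : Fin (N+2) → BW) (Fin.castSucc (Fin.last N)) = v := by
      rw [Fin.snoc_castSucc]
      exact hc.2.1
    have hfst : ((stepTo u w N (stepFrom u w N ⟨⟨v, hv⟩, ⟨c, hc⟩⟩)).fst : BW) = v := hvv
    refine Sigma.ext (Subtype.ext hvv) ?_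
    rw [Subtype.heq_iff_coe_eq]
    · funext i
      show (Fin.snoc c w : Fin (N+2) → BW) (Fin.castSucc i) = c i
      rw [Fin.snoc_castSucc]
    · intro x
      rw [hfst]

lemma card_chains (u : BW) : ∀ (N : ℕ) (w : BW),
    Nat.card (Chains u w N) = nchains N u w := by
  intro N
  induction N with
  | zero =>
    intro w
    rw [nchains]
    by_cases h : u = w
    · subst h
      rw [if_pos rfl]
      have : Unique (Chains u u 0) := by
        refine ⟨⟨⟨fun _ => u, rfl, rfl, fun i => i.elim0⟩⟩, ?_⟩
        rintro ⟨c, h0, hl, hc⟩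
        apply Subtype.ext
        funext i
        have : i = 0 := Fin.ext (by omega)
        rw [this]
        exact h0
      exact Nat.card_unique
    · rw [if_neg h]
      have : IsEmpty (Chains u w 0) := by
        refine ⟨?_⟩
        rintro ⟨c, h0, hl, _⟩
        exact h (h0 ▸ (by rw [← hl]; rfl))
      exact Nat.card_of_isEmpty
  | succ N ih =>
    intro w
    rw [Nat.card_congr (stepEquiv u w N), natCard_sigma, nchains]
    rw [← Finset.sum_coe_sort (coverSet w) (fun v => nchains N u v)]
    exact Finset.sum_congr rfl fun v _ => ih v.1

/-- the dimension count (4.11) of the paper.  For `n, m ≥ 2` and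
`N = n₁ + m₁ ≥ 1`, the number of saturated chains in the subword order from
`+ⁿ −ᵐ` to `+^{n₁+n−1} − + −^{m₁+m−1}` equals `N · N! / (n₁! · m₁!)`; we state it
multiplied out: `(number of chains) · n₁! · m₁! = N · N!`. -/
theorem saturated_chain_count (n m n₁ m₁ N : ℕ) (hn : 2 ≤ n) (hm : 2 ≤ m)
    (hN : N = n₁ + m₁) (hN1 : 1 ≤ N) :
    Nat.card {c : Fin (N + 1) → BW //
        c 0 = List.replicate n true ++ List.replicate m false ∧
        c (Fin.last N) = List.replicate (n₁ + n - 1) true ++ [false, true]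
            ++ List.replicate (m₁ + m - 1) false ∧
        ∀ i : Fin N, CoveredBy (c i.castSucc) (c i.succ)}
      * (Nat.factorial n₁ * Nat.factorial m₁)
    = N * Nat.factorial N := by
  have e1 : n₁ + n - 1 = n - 1 + n₁ := by omega
  have e2 : m₁ + m - 1 = m - 1 + m₁ := by omega
  rw [e1, e2]
  have ht : {c : Fin (N + 1) → BW //
        c 0 = List.replicate n true ++ List.replicate m false ∧
        c (Fin.last N) = List.replicate (n - 1 + n₁) true ++ [false, true]
            ++ List.replicate (m - 1 + m₁) false ∧
        ∀ i : Fin N, CoveredBy (c i.castSucc) (c i.succ)}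
      = Chains (Aw n m) (Bw (n - 1 + n₁) (m - 1 + m₁)) N := rfl
  rw [ht, card_chains (Aw n m) N (Bw (n - 1 + n₁) (m - 1 + m₁)),
    chainsB hn hm N n₁ m₁ (by omega)]
  have key : Nat.choose N n₁ * Nat.factorial n₁ * Nat.factorial m₁ = Nat.factorial N := by
    have h := Nat.choose_mul_factorial_mul_factorial (show n₁ ≤ N by omega)
    have hm1 : N - n₁ = m₁ := by omega
    rwa [hm1] at h
  calc N * Nat.choose N n₁ * (Nat.factorial n₁ * Nat.factorial m₁)
      = N * (Nat.choose N n₁ * Nat.factorial n₁ * Nat.factorial m₁) := by ring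
    _ = N * Nat.factorial N := by rw [key]

end Zigzag
end

section
/- Let t be the template (+¹, ∞−, ∞+, −¹, ∞+) (clusters: + with multiplicity 1, − with multiplicity ∞, + with multiplicity ∞, − with multiplicity 1, + with multiplicity ∞) and let t₁ = (∞−, ∞+, −¹, ∞+). Then Z(t) is the disjoint union of Z(t₁) and Z(t)^{+−−} = {a ∈ Z(t) : a ≥ +−−}; that is, Z(t) = Z(t₁) ∪ Z(t)^{+−−} and Z(t₁) ∩ Z(t)^{+−−} = ∅. -/
/-!
Common definitions: the zigzag graph on binary words, templates and their coideals,
zigzag flanges and sections, the functions `F_λ(u)` and `φ_{t,w}`, and harmonic /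
semifinite / indecomposable functions on subgraphs of the zigzag graph.
-/

open scoped ENNReal NNReal

namespace Zigzag

/-- The set of upper neighbours of `a` lying in `S` is finite. -/
lemma upSet_finite (S : Set BW) (a : BW) : {b | b ∈ S ∧ CoveredBy a b}.Finite :=
  (List.finite_length_eq Bool (a.length + 1)).subset (fun _ hb => hb.2.2)

/-- The finset of upper neighbours of `a` inside `S`. -/
noncomputable def upFinset (S : Set BW) (a : BW) : Finset BW :=
  (upSet_finite S a).toFinset

/-- A `[0,∞]`-valued function is harmonic on `S ⊆ Z` (with the edges induced from the
zigzag graph) if its value at any vertex of `S` equals the sum of its values at the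
upper neighbours lying in `S`. -/
def HarmonicOn (S : Set BW) (φ : BW → ℝ≥0∞) : Prop :=
  ∀ a ∈ S, φ a = ∑ b ∈ upFinset S a, φ b

/-- A template: a nonempty sequence of clusters with alternating signs, each cluster
being a sign (`true` = `+`, `false` = `−`) with a multiplicity in `{1,2,…} ∪ {∞}`,
containing at least one infinite cluster. -/
structure Template where
  clusters : List (Bool × ℕ∞)
  ne : clusters ≠ []
  pos : ∀ c ∈ clusters, c.2 ≠ 0
  alternating : clusters.Chain' fun c d => c.1 ≠ d.1
  hasInf : ∃ c ∈ clusters, c.2 = ⊤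

/-- The binary word obtained from a list of clusters by replacing every infinite
multiplicity by `N` (and keeping the finite multiplicities). -/
def clWord (cs : List (Bool × ℕ∞)) (N : ℕ) : BW :=
  (cs.map fun c => List.replicate (if c.2 = ⊤ then N else c.2.toNat) c.1).flatten

/-- The coideal generated by a list of clusters: all binary words that are subwords of
some instantiation. -/
def Zcl (cs : List (Bool × ℕ∞)) : Set BW := {a | ∃ N, a.Sublist (clWord cs N)}

/-- The coideal `Z(t)` of the zigzag graph attached to a template `t`. -/
def Zt (t : Template) : Set BW := Zcl t.clusters

/-- The cluster in position `i` of `t` is a separating cluster: a one-symbol finite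
cluster which is not outermost and whose two neighbours are infinite clusters
(necessarily of the same sign). -/
def Template.isSep (t : Template) (i : ℕ) : Prop :=
  0 < i ∧ i + 1 < t.clusters.length ∧
  (t.clusters.getD i (true, 1)).2 = 1 ∧
  (t.clusters.getD (i - 1) (true, 1)).2 = ⊤ ∧
  (t.clusters.getD (i + 1) (true, 1)).2 = ⊤

/-- A template is finite if all its finite clusters are separating; otherwise it is
semifinite. -/
def Template.IsFiniteTemplate (t : Template) : Prop :=
  ∀ i < t.clusters.length, (t.clusters.getD i (true, 1)).2 ≠ ⊤ → t.isSep i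

/-- The number of infinite clusters of a template. -/
def Template.numInf (t : Template) : ℕ :=
  (t.clusters.filter fun c => decide (c.2 = ⊤)).length

/-- Position `p` of `t` carries a finite non-separating cluster, i.e. a cluster
contributing to the zigzag flange of `t`. -/
def IsFlangePos (t : Template) (p : ℕ) : Prop :=
  p < t.clusters.length ∧ (t.clusters.getD p (true, 1)).2 ≠ ⊤ ∧ ¬t.isSep p

/-- Decrease by one the multiplicity of the cluster in position `p`. -/
def decAt (cs : List (Bool × ℕ∞)) (p : ℕ) : List (Bool × ℕ∞) :=
  cs.set p ((cs.getD p (true, 1)).1, (cs.getD p (true, 1)).2 - 1)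

/-- The coideal `J(t)`: the union of the coideals `Z(r)` over all `r` obtained from `t`
by removing a single symbol from a cluster corresponding to a block of a binary word
from the zigzag flange of `t` (no merging of clusters is needed to generate `Z(r)`). -/
def Jt (t : Template) : Set BW :=
  {a | ∃ p, IsFlangePos t p ∧ a ∈ Zcl (decAt t.clusters p)}

/-- The canonical splitting of a template `t` into its zigzag flange
`fl(t) = (a₀, …, a_k)` (given by the lists `A 0, …, A k` of clusters, each consisting
of finite non-separating clusters of `t`) and its sections `t₁, …, t_k` (the maximal
groups of consecutive clusters forming finite templates), so that
`t = (a₀, t₁, a₁, …, a_{k−1}, t_k, a_k)`.  The two `interior` conditions express the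
maximality of the decomposition. -/
structure SectionData (t : Template) where
  k : ℕ
  A : Fin (k + 1) → List (Bool × ℕ∞)
  T : Fin k → Template
  concat : t.clusters
      = A 0 ++ (List.ofFn fun i : Fin k => (T i).clusters ++ A i.succ).flatten
  finA : ∀ j, ∀ c ∈ A j, c.2 ≠ ⊤
  secFin : ∀ i, (T i).IsFiniteTemplate
  interior_ne : ∀ j : Fin (k + 1), (j : ℕ) ≠ 0 → (j : ℕ) ≠ k → A j ≠ []
  interior_not_sep : ∀ j : Fin (k + 1), (j : ℕ) ≠ 0 → (j : ℕ) ≠ k →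
      ∀ s : Bool, A j ≠ [(s, 1)]

/-- The binary word corresponding to a list of finite clusters (a flange word). -/
def flangeWord (cs : List (Bool × ℕ∞)) : BW :=
  (cs.map fun c => List.replicate c.2.toNat c.1).flatten

/-- `a₀ ⊔ ℓ 1 ⊔ a₁ ⊔ … ⊔ ℓ k ⊔ a_k` (empty flange words disappear). -/
def assemble {t : Template} (D : SectionData t) (ℓ : Fin D.k → BW) : BW :=
  flangeWord (D.A 0) ++ (List.ofFn fun i : Fin D.k => ℓ i ++ flangeWord (D.A i.succ)).flatten

/-- `ℓ` is a decomposition of `a` along the sections of `t`: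
`bw(a) = a₀ ⊔ bw(ℓ 1) ⊔ a₁ ⊔ … ⊔ bw(ℓ k) ⊔ a_k` with `ℓ i ∈ Z(tᵢ)`. -/
def decompOf {t : Template} (D : SectionData t) (a : BW) (ℓ : Fin D.k → BW) : Prop :=
  (∀ i, ℓ i ∈ Zt (D.T i)) ∧ a = assemble D ℓ

/-- The signs of the infinite clusters of a list of clusters, in order. -/
def infSigns (cs : List (Bool × ℕ∞)) : List Bool :=
  (cs.filter fun c => decide (c.2 = ⊤)).map Prod.fst

/-- The number of weights consumed by the sections preceding the `i`-th one. -/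
def secOffset {t : Template} (D : SectionData t) (i : Fin D.k) : ℕ :=
  ∑ i' ∈ Finset.univ.filter (· < i), (infSigns (D.T i').clusters).length

/-- The part `vᵢ` of the tuple of weights `w` corresponding to the infinite clusters of
the `i`-th section, as a sequence of (sign, weight) pairs. -/
def vD {t : Template} (D : SectionData t) (w : List ℝ) (i : Fin D.k) : List (Bool × ℝ) :=
  (infSigns (D.T i).clusters).zip (w.drop (secOffset D i))

/-- `F_λ(u)` for a finite sequence `u` of (sign, length) pairs and a zigzag `λ`
(encoded by its binary word `a`, so that `λ` has `a.length + 1` boxes): the sum, over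
all decompositions of `λ` into `u.length` consecutive (possibly empty) zigzags
`λ(1), …, λ(m)` with `λ(i)` a row when the `i`-th sign is `+` and a column when it is
`−`, of `u₁ ^ |λ(1)| ⋯ u_m ^ |λ(m)|`.  A decomposition is recorded by the tuple `c` of
the numbers of boxes of the pieces; the row/column constraint says that the letters of
`a` strictly inside the `i`-th group of boxes all equal the `i`-th sign. -/
noncomputable def Fword (u : List (Bool × ℝ)) (a : BW) : ℝ :=
  ∑ c ∈ (Finset.Nat.antidiagonalTuple u.length (a.length + 1)).filter
      (fun c => ∀ i : Fin u.length,
        (a.drop (∑ i' ∈ Finset.univ.filter (· < i), c i')).take (c i - 1)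
          = List.replicate (c i - 1) (u.get i).1),
    ∏ i, (u.get i).2 ^ c i

open Classical in
/-- The function `φ_{t,w}` attached to a semifinite zigzag growth model `(t, w)`:
it equals `+∞` on `J(t)`, and on `Z(t) ∖ J(t)` it equals
`F_{λ^{(1)}}(v₁) ⋯ F_{λ^{(k)}}(v_k)`, where `(λ^{(1)}, …, λ^{(k)})` is the (unique)
decomposition of `λ` along the sections of `t` (it is `0` off `Z(t)`). -/
noncomputable def phiTW (t : Template) (D : SectionData t) (w : List ℝ) (a : BW) : ℝ≥0∞ :=
  if a ∉ Zt t then 0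
  else if a ∈ Jt t then ⊤
  else if h : ∃ ℓ : Fin D.k → BW, decompOf D a ℓ then
    ENNReal.ofReal (∏ i, Fword (vD D w i) (h.choose i))
  else 0

section Kcone

/-- The relation `λ = ∑_{μ : λ ↗ μ} μ` (within `S`) as an element of the free module. -/
noncomputable def relOf (S : Set BW) (a : BW) : BW →₀ ℝ :=
  Finsupp.single a 1 - ∑ b ∈ upFinset S a, Finsupp.single b 1

/-- The submodule of relations defining `K(S)`. -/
noncomputable def Krel (S : Set BW) : Submodule ℝ (BW →₀ ℝ) :=
  Submodule.span ℝ {f | ∃ a ∈ S, f = relOf S a}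

/-- The class of `f` in `K(S) = (⊕_{λ ∈ S} ℝ λ) ⧸ (relations)`. -/
noncomputable def kmk (S : Set BW) (f : BW →₀ ℝ) : (BW →₀ ℝ) ⧸ Krel S :=
  Submodule.Quotient.mk f

/-- Nonnegative formal combinations of vertices of `S`. -/
def NonnegOn (S : Set BW) (f : BW →₀ ℝ) : Prop :=
  (∀ x, 0 ≤ f x) ∧ ∀ x ∈ f.support, x ∈ S

/-- The cone `K⁺(S)` spanned by the vertices of `S` in `K(S)`. -/
noncomputable def Kpos (S : Set BW) : Set ((BW →₀ ℝ) ⧸ Krel S) :=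
  kmk S '' {f | NonnegOn S f}

/-- The order defined by the cone `K⁺(S)`: `x ≤_K y` iff `y − x ∈ K⁺(S)`. -/
def leK (S : Set BW) (x y : (BW →₀ ℝ) ⧸ Krel S) : Prop := y - x ∈ Kpos S

/-- The value of (the canonical extension of) `φ` at a nonnegative combination of
vertices. -/
noncomputable def phiHat (φ : BW → ℝ≥0∞) (f : BW →₀ ℝ) : ℝ≥0∞ :=
  ∑ x ∈ f.support, ENNReal.ofReal (f x) * φ x

/-- `φ` is finite on `S`. -/
def FiniteOn (S : Set BW) (φ : BW → ℝ≥0∞) : Prop := ∀ a ∈ S, φ a ≠ ⊤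

/-- `φ` is a semifinite function on (the graph) `S`: it is not everywhere finite, and
its value at any element `a` of the cone `K⁺` is the supremum of its values at the
elements `b ≤_K a` of the cone where it is finite. -/
def SemifiniteOn (S : Set BW) (φ : BW → ℝ≥0∞) : Prop :=
  (∃ a ∈ S, φ a = ⊤) ∧
  ∀ f : BW →₀ ℝ, NonnegOn S f →
    phiHat φ f =
      ⨆ g ∈ {g : BW →₀ ℝ |
        NonnegOn S g ∧ leK S (kmk S g) (kmk S f) ∧ phiHat φ g ≠ ⊤}, phiHat φ g

/-- A semifinite harmonic function `φ` on `S` is indecomposable if any finite or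
semifinite harmonic function `φ′ ≤ φ` on `S` which does not vanish identically on the
finiteness ideal of `φ` is a constant multiple of `φ` on that ideal. -/
def IndecSemifiniteOn (S : Set BW) (φ : BW → ℝ≥0∞) : Prop :=
  ∀ φ' : BW → ℝ≥0∞, HarmonicOn S φ' →
    (FiniteOn S φ' ∨ SemifiniteOn S φ') →
    (∀ a ∈ S, φ' a ≤ φ a) →
    (∃ a ∈ S, φ a ≠ ⊤ ∧ φ' a ≠ 0) →
    ∃ c : ℝ≥0, ∀ a ∈ S, φ a ≠ ⊤ → φ' a = (c : ℝ≥0∞) * φ a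

end Kcone

end Zigzag

namespace Zigzag

/-- The template `t = (+¹, ∞−, ∞+, −¹, ∞+)` of Example 3.7 of the paper. -/
def exTemplate : Template where
  clusters := [(true, 1), (false, ⊤), (true, ⊤), (false, 1), (true, ⊤)]
  ne := by decide
  pos := by decide
  alternating := by simp [List.Chain', List.isChain_cons]
  hasInf := by decide

/-- The template `t₁ = (∞−, ∞+, −¹, ∞+)`, the unique section of `exTemplate`. -/
def exTemplate₁ : Template where
  clusters := [(false, ⊤), (true, ⊤), (false, 1), (true, ⊤)]
  ne := by decide
  pos := by decide
  alternating := by simp [List.Chain', List.isChain_cons]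
  hasInf := by decide


lemma clWord_ex1 (N : ℕ) : clWord exTemplate₁.clusters N
    = List.replicate N false ++ (List.replicate N true ++ ([false] ++ List.replicate N true)) := by
  simp [clWord, exTemplate₁]

lemma clWord_ex (N : ℕ) : clWord exTemplate.clusters N = true :: clWord exTemplate₁.clusters N := by
  simp [clWord, exTemplate, exTemplate₁]

lemma repl_le' {b : Bool} {i M : ℕ} (h : i ≤ M) :
    (List.replicate i b).Sublist (List.replicate M b) :=
  (List.replicate_sublist_replicate _).mpr h

lemma single_repl' {b : Bool} {M : ℕ} (h : 1 ≤ M) :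
    [b].Sublist (List.replicate M b) :=
  List.singleton_sublist.mpr (List.mem_replicate.mpr ⟨by omega, rfl⟩)

lemma not_tff_w (N : ℕ) : ¬ [true, false, false].Sublist (clWord exTemplate₁.clusters N) := by
  rw [clWord_ex1]
  intro h
  rw [List.sublist_append_iff] at h
  obtain ⟨l1, l2, heq, h1, h2⟩ := h
  rw [List.sublist_replicate_iff] at h1
  obtain ⟨n, -, rfl⟩ := h1
  cases n with
  | succ n => simp [List.replicate_succ] at heq
  | zero =>
    simp only [List.replicate_zero, List.nil_append] at heq
    subst heq
    rw [List.sublist_append_iff] at h2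
    obtain ⟨l1, l2, heq, h1, h2⟩ := h2
    rw [List.sublist_replicate_iff] at h1
    obtain ⟨m, -, rfl⟩ := h1
    rw [List.sublist_append_iff] at h2
    obtain ⟨p, q, heq2, hp, hq⟩ := h2
    rw [List.sublist_replicate_iff] at hq
    obtain ⟨j, -, rfl⟩ := hq
    subst heq2
    rw [List.sublist_singleton] at hp
    have := congrArg (List.count false) heq
    rcases hp with rfl | rfl <;>
      simp [List.count_append, List.count_replicate, List.count_cons] at this

lemma lemA {N : ℕ} {a : BW} (h : a.Sublist (clWord exTemplate₁.clusters N)) :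
    ¬ [true, false, false].Sublist a :=
  fun h2 => not_tff_w N (h2.trans h)

lemma helperM (M : ℕ) :
    (List.replicate M true ++ ([false] ++ List.replicate M true)).Sublist
      (clWord exTemplate₁.clusters M) := by
  rw [clWord_ex1]; exact List.sublist_append_right _ _

lemma lemB {N : ℕ} {a : BW} (h : a.Sublist (clWord exTemplate.clusters N))
    (h2 : ¬ [true, false, false].Sublist a) : a ∈ Zt exTemplate₁ := by
  rw [clWord_ex] at h
  rw [show (true :: clWord exTemplate₁.clusters N) = [true] ++ clWord exTemplate₁.clusters N
    from rfl, List.sublist_append_iff] at h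
  obtain ⟨l0, l2, rfl, h0, h1⟩ := h
  rw [List.sublist_singleton] at h0
  rcases h0 with rfl | rfl
  · exact ⟨N, by simpa using h1⟩
  · rw [clWord_ex1, List.sublist_append_iff] at h1
    obtain ⟨f, m, rfl, hf, hm⟩ := h1
    rw [List.sublist_replicate_iff] at hf
    obtain ⟨k, -, rfl⟩ := hf
    rw [List.sublist_append_iff] at hm
    obtain ⟨p, q, rfl, hp, hq⟩ := hm
    rw [List.sublist_replicate_iff] at hp
    obtain ⟨i, -, rfl⟩ := hp
    rw [List.sublist_append_iff] at hq
    obtain ⟨q, r, rfl, hq, hr⟩ := hq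
    rw [List.sublist_replicate_iff] at hr
    obtain ⟨j, -, rfl⟩ := hr
    rw [List.sublist_singleton] at hq
    set M := i + j + 1 with hM
    rcases hq with rfl | rfl
    · match k, h2 with
      | 0, h2 =>
        refine ⟨M, List.Sublist.trans ?_ (helperM M)⟩
        have ha : ([true] : BW) ++ (List.replicate 0 false ++ (List.replicate i true ++
            ([] ++ List.replicate j true))) = List.replicate (i + j + 1) true := by
          simp [List.replicate_succ, ← List.replicate_add]
        rw [ha]
        exact List.Sublist.trans (repl_le' (by omega)) (List.sublist_append_left _ _)
      | 1, h2 =>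
        refine ⟨M, List.Sublist.trans ?_ (helperM M)⟩
        have ha : ([true] : BW) ++ (List.replicate 1 false ++ (List.replicate i true ++
            ([] ++ List.replicate j true)))
            = [true] ++ ([false] ++ (List.replicate i true ++ List.replicate j true)) := by
          simp
        rw [ha]
        refine List.Sublist.append (single_repl' (by omega))
          (List.Sublist.append (List.Sublist.refl _) ?_)
        rw [← List.replicate_add]
        exact repl_le' (by omega)
      | (k+2), h2 =>
        exfalso; apply h2
        refine List.cons_sublist_cons.mpr ?_
        exact List.Sublist.trans (repl_le' (b := false) (i := 2) (M := k + 2) (by omega))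
          (List.sublist_append_left _ _)
    · match k, h2 with
      | 0, h2 =>
        refine ⟨M, List.Sublist.trans ?_ (helperM M)⟩
        have ha : ([true] : BW) ++ (List.replicate 0 false ++ (List.replicate i true ++
            ([false] ++ List.replicate j true)))
            = List.replicate (i + 1) true ++ ([false] ++ List.replicate j true) := by
          simp [List.replicate_succ]
        rw [ha]
        exact List.Sublist.append (repl_le' (by omega))
          (List.Sublist.append (List.Sublist.refl _) (repl_le' (by omega)))
      | (k+1), h2 =>
        exfalso; apply h2
        refine List.cons_sublist_cons.mpr ?_
        refine List.Sublist.append (l₁ := [false]) (l₂ := List.replicate (k+1) false)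
          (r₁ := [false]) (single_repl' (by omega)) ?_
        refine List.Sublist.trans ?_ (List.sublist_append_right _ _)
        exact List.sublist_append_left _ _

/-- Example 3.7 of the paper.  For
`t = (+¹, ∞−, ∞+, −¹, ∞+)` and `t₁ = (∞−, ∞+, −¹, ∞+)` one has the disjoint
decomposition `Z(t) = Z(t₁) ⊔ Z(t)^{+−−}`. -/
theorem example_Zt_decomposition :
    Zt exTemplate = Zt exTemplate₁ ∪
        {a ∈ Zt exTemplate | [true, false, false].Sublist a} ∧
      Zt exTemplate₁ ∩ {a ∈ Zt exTemplate | [true, false, false].Sublist a} = ∅ := by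
  constructor
  · ext a
    simp only [Set.mem_union, Set.mem_setOf_eq]
    constructor
    · intro ha
      by_cases htff : [true, false, false].Sublist a
      · exact Or.inr ⟨ha, htff⟩
      · obtain ⟨N, hN⟩ := ha
        exact Or.inl (lemB hN htff)
    · rintro (⟨N, hN⟩ | ⟨ha, -⟩)
      · exact ⟨N, hN.trans (by rw [clWord_ex]; exact List.sublist_cons_self _ _)⟩
      · exact ha
  · ext a
    simp only [Set.mem_inter_iff, Set.mem_setOf_eq, Set.mem_empty_iff_false, iff_false,
      not_and]
    rintro ⟨N, hN⟩ - htff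
    exact lemA hN htff


end Zigzag
end
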